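/- arXiv:2009.13319 — 10 statements merged into one kernel-verified Lean document; each statement's English description precedes it below -/
import Mathlib

section
/- For every integer c there exists a semicomplete digraph D (a digraph in which every pair of distinct vertices is joined by at least one arc) such that D contains no ↔K_3 (no three vertices pairwise joined by digons), D contains no induced directed triangle →C_3, and χ⃗(D) ≥ c. In particular, the set {↔K_3, K̄_2, →C_3} is not heroic. -/
/-- A directed cycle (length at least 2, pairwise distinct vertices) in the digraph
with arc relation `A`; a digon counts as a directed cycle of length 2. -/
def HasDicycle {V : Type*} (A : V → V → Prop) : Prop :=
  ∃ (n : ℕ) (f : Fin (n + 2) → V), Function.Injective f ∧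
    ∀ i : Fin (n + 2), A (f i) (f (i + 1))

/-- `c` is a dicoloring of the digraph `A`: no color class contains a directed cycle. -/
def IsDicoloring {V : Type*} (A : V → V → Prop) {k : ℕ} (c : V → Fin k) : Prop :=
  ¬ HasDicycle (fun x y => A x y ∧ c x = c y)

/-- The dichromatic number of the digraph `A`: the least number of colors in a dicoloring. -/
noncomputable def dichromaticNumber {V : Type*} (A : V → V → Prop) : ℕ :=
  sInf {k : ℕ | ∃ c : V → Fin k, IsDicoloring A c}

/-- The digraph `B` appears as an induced subdigraph of the digraph `A`. -/
def HasInducedCopy {V W : Type*} (A : V → V → Prop) (B : W → W → Prop) : Prop :=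
  ∃ f : W → V, Function.Injective f ∧ ∀ x y, B x y ↔ A (f x) (f y)

/-- An oriented graph: at most one arc between any pair of vertices
(in particular no loops and no digons). -/
def IsOrientedGraph {V : Type*} (A : V → V → Prop) : Prop :=
  ∀ x y, A x y → ¬ A y x

/-- The complete symmetric digraph `↔K_k` (all digons present). -/
def symK (k : ℕ) : Fin k → Fin k → Prop := fun x y => x ≠ y

/-- The arcless digraph `K̄_k`. -/
def emptyK (k : ℕ) : Fin k → Fin k → Prop := fun _ _ => False

/-- The transitive tournament `TT_t` (note `TT_2 = →K_2`). -/
def transTour (t : ℕ) : Fin t → Fin t → Prop := fun x y => x < y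

/-- The directed triangle `→C_3`. -/
def dirC3 : Fin 3 → Fin 3 → Prop := fun x y => (y : ℕ) = ((x : ℕ) + 1) % 3

/-- The directed path `P^+(k)`: `k` arcs all oriented in the same direction, on `k+1` vertices. -/
def dirPath (k : ℕ) : Fin (k + 1) → Fin (k + 1) → Prop := fun x y => (x : ℕ) + 1 = (y : ℕ)

/-- `→K_2 + K_1`: a single arc together with an isolated vertex. -/
def K2plusK1 : Fin 3 → Fin 3 → Prop := fun x y => x = 0 ∧ y = 1

/-- `S_2^+`: the oriented star with two arcs leaving the center. -/
def S2plus : Fin 3 → Fin 3 → Prop := fun x y => x = 0 ∧ (y = 1 ∨ y = 2)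

/-- `S_2^-`: the oriented star with two arcs entering the center. -/
def S2minus : Fin 3 → Fin 3 → Prop := fun x y => (x = 1 ∨ x = 2) ∧ y = 0

/-- The oriented graph `R` on vertices `a,…,g = 0,…,6` with arcs
`a→b, b→c, c→a, b→d, d→a, c→e, e→b, f→d, d→g, g→f, f→e, e→g`. -/
def Rdigraph : Fin 7 → Fin 7 → Prop := fun x y =>
  (x = 0 ∧ y = 1) ∨ (x = 1 ∧ y = 2) ∨ (x = 2 ∧ y = 0) ∨ (x = 1 ∧ y = 3) ∨ (x = 3 ∧ y = 0) ∨
  (x = 2 ∧ y = 4) ∨ (x = 4 ∧ y = 1) ∨ (x = 5 ∧ y = 3) ∨ (x = 3 ∧ y = 6) ∨ (x = 6 ∧ y = 5) ∨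
  (x = 5 ∧ y = 4) ∨ (x = 4 ∧ y = 6)

/-- The adjacency pattern of the (undirected) path on `4` vertices. -/
def pathGraph4 : Fin 4 → Fin 4 → Prop := fun x y =>
  (x : ℕ) + 1 = (y : ℕ) ∨ (y : ℕ) + 1 = (x : ℕ)

/-- The underlying undirected graph of `A` contains the pattern `P` as an induced subgraph. -/
def HasInducedUCopy {V W : Type*} (A : V → V → Prop) (P : W → W → Prop) : Prop :=
  ∃ f : W → V, Function.Injective f ∧ ∀ x y, P x y ↔ (A (f x) (f y) ∨ A (f y) (f x))

/-- The underlying undirected graph of `A` is triangle-free. -/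
def UTriangleFree {V : Type*} (A : V → V → Prop) : Prop :=
  ¬ ∃ x y z : V, (A x y ∨ A y x) ∧ (A y z ∨ A z y) ∧ (A x z ∨ A z x)

/-- The underlying undirected graph of `A` contains no `K_4`. -/
def UK4Free {V : Type*} (A : V → V → Prop) : Prop :=
  ¬ ∃ a b c d : V, (A a b ∨ A b a) ∧ (A a c ∨ A c a) ∧ (A a d ∨ A d a) ∧
    (A b c ∨ A c b) ∧ (A b d ∨ A d b) ∧ (A c d ∨ A d c)

/-- The underlying undirected (simple) graph of the digraph `A`. -/
def underlyingGraph {V : Type*} (A : V → V → Prop) : SimpleGraph V where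
  Adj x y := x ≠ y ∧ (A x y ∨ A y x)
  symm := ⟨fun x y h => ⟨Ne.symm h.1, h.2.symm⟩⟩
  loopless := ⟨fun _ h => h.1 rfl⟩


/-! ### Auxiliary construction: shift graph inside a transitive tournament -/

/-- Shift-arc pattern: `v` decodes to an increasing pair `(a,b)` and `w` to `(b,d)`. -/
def Psh (N v w : ℕ) : Prop :=
  v / N < v % N ∧ w / N < w % N ∧ v % N = w / N

/-- Shift adjacency (symmetric). -/
def AdjSh (N v w : ℕ) : Prop := Psh N v w ∨ Psh N w v

lemma adjSh_symm {N v w : ℕ} (h : AdjSh N v w) : AdjSh N w v := h.symm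

lemma psh_trans_false {N a b c : ℕ} (hab : Psh N a b) (hbc : Psh N b c)
    (hac : Psh N a c) : False := by
  obtain ⟨_, hb, hab2⟩ := hab
  obtain ⟨_, _, hbc2⟩ := hbc
  obtain ⟨_, _, hac2⟩ := hac
  -- b/N < b%N, a%N = b/N, b%N = c/N, a%N = c/N
  rw [hbc2, ← hac2, hab2] at hb
  exact lt_irrefl _ hb

lemma psh_cyc_false {N a b c : ℕ} (hab : Psh N a b) (hbc : Psh N b c)
    (hca : Psh N c a) : False := by
  obtain ⟨ha, _, hab2⟩ := hab
  obtain ⟨hb, _, hbc2⟩ := hbc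
  obtain ⟨hc, _, hca2⟩ := hca
  have : a / N < a / N := by
    calc a / N < a % N := ha
    _ = b / N := hab2
    _ < b % N := hb
    _ = c / N := hbc2
    _ < c % N := hc
    _ = a / N := hca2
  exact lt_irrefl _ this

lemma adjSh_triangle_false {N u v w : ℕ} (huv : AdjSh N u v) (hvw : AdjSh N v w)
    (huw : AdjSh N u w) : False := by
  rcases huv with h1 | h1 <;> rcases hvw with h2 | h2 <;> rcases huw with h3 | h3
  · exact psh_trans_false h1 h2 h3
  · exact psh_cyc_false h1 h2 h3
  · exact psh_trans_false h3 h2 h1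
  · exact psh_trans_false h3 h1 h2
  · exact psh_trans_false h1 h3 h2
  · exact psh_trans_false h2 h3 h1
  · exact psh_cyc_false h2 h1 h3
  · exact psh_trans_false h2 h1 h3

lemma psh_irrefl {N v : ℕ} (h : Psh N v v) : False := by
  obtain ⟨h1, _, h3⟩ := h
  rw [h3] at h1
  exact lt_irrefl _ h1

lemma adjSh_irrefl {N v : ℕ} (h : AdjSh N v v) : False := by
  rcases h with h | h <;> exact psh_irrefl h

/-- The main construction. -/
lemma main_construction (c : ℕ) :
    ∃ (n : ℕ) (A : Fin n → Fin n → Prop), Irreflexive A ∧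
      (∀ x y : Fin n, x ≠ y → A x y ∨ A y x) ∧
      ¬ HasInducedCopy A (symK 3) ∧ ¬ HasInducedCopy A dirC3 ∧
      c ≤ dichromaticNumber A := by
  set N : ℕ := 2 ^ c with hN
  have Npos : 0 < N := Nat.pow_pos (by norm_num)
  refine ⟨N * N, fun v w => (v : ℕ) < (w : ℕ) ∨ AdjSh N v w, ?_, ?_, ?_, ?_, ?_⟩
  · -- irreflexive
    intro v hv
    rcases hv with h | h
    · exact lt_irrefl _ h
    · exact adjSh_irrefl h
  · -- semicomplete
    intro x y hxy
    rcases Nat.lt_or_ge (x : ℕ) (y : ℕ) with h | h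
    · exact Or.inl (Or.inl h)
    · rcases Nat.lt_or_ge (y : ℕ) (x : ℕ) with h' | h'
      · exact Or.inr (Or.inl h')
      · exact absurd (Fin.ext (le_antisymm h' h)) hxy
  · -- no symK 3
    rintro ⟨f, finj, hf⟩
    have digon : ∀ x y : Fin 3, x ≠ y → AdjSh N (f x) (f y) := by
      intro x y hxy
      have h1 := (hf x y).mp hxy
      have h2 := (hf y x).mp hxy.symm
      rcases h1 with h1 | h1
      · rcases h2 with h2 | h2
        · omega
        · exact adjSh_symm h2
      · exact h1
    exact adjSh_triangle_false (digon 0 1 (by decide)) (digon 1 2 (by decide))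
      (digon 0 2 (by decide))
  · -- no induced dirC3
    rintro ⟨f, finj, hf⟩
    have key : ∀ x y : Fin 3, dirC3 x y → ¬ dirC3 y x → ((f x : ℕ) < (f y : ℕ)) := by
      intro x y hxy hyx
      have h1 := (hf x y).mp hxy
      have h2 : ¬ ((f y : ℕ) < (f x : ℕ) ∨ AdjSh N (f y) (f x)) :=
        fun h => hyx ((hf y x).mpr h)
      push_neg at h2
      rcases h1 with h1 | h1
      · exact h1
      · exact absurd (adjSh_symm h1) h2.2
    have h01 := key 0 1 (by simp [dirC3]) (by simp [dirC3])
    have h12 := key 1 2 (by simp [dirC3]) (by simp [dirC3])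
    have h20 := key 2 0 (by simp [dirC3]) (by simp [dirC3])
    omega
  · -- dichromatic number lower bound
    have hSne : {k : ℕ | ∃ col : Fin (N * N) → Fin k,
        IsDicoloring (fun v w : Fin (N * N) => (v : ℕ) < (w : ℕ) ∨ AdjSh N v w) col}.Nonempty := by
      refine ⟨N * N, fun v => v, ?_⟩
      rintro ⟨m, f, finj, hf⟩
      have h := (hf 0).2
      have h2 := finj h
      have h3 : (0 : Fin (m + 2)).val = (0 + 1 : Fin (m + 2)).val := by rw [← h2]
      simp [Fin.add_def] at h3
    apply le_csInf hSne
    rintro k ⟨col, hcol⟩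
    by_contra hlt
    push_neg at hlt
    -- encoding of increasing pairs
    have hbound : ∀ i j : Fin N, N * (i : ℕ) + (j : ℕ) < N * N := by
      intro i j
      have h1 : N * ((i : ℕ) + 1) ≤ N * N := Nat.mul_le_mul_left N i.isLt
      rw [Nat.mul_succ] at h1
      have := j.isLt
      omega
    set encf : Fin N → Fin N → Fin (N * N) :=
      fun i j => ⟨N * (i : ℕ) + (j : ℕ), hbound i j⟩ with hencf
    have hdiv : ∀ i j : Fin N, ((encf i j : Fin (N * N)) : ℕ) / N = (i : ℕ) := by
      intro i j
      show (N * (i : ℕ) + (j : ℕ)) / N = (i : ℕ)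
      rw [Nat.mul_add_div Npos, Nat.div_eq_of_lt j.isLt]
      omega
    have hmod : ∀ i j : Fin N, ((encf i j : Fin (N * N)) : ℕ) % N = (j : ℕ) := by
      intro i j
      show (N * (i : ℕ) + (j : ℕ)) % N = (j : ℕ)
      rw [Nat.mul_add_mod, Nat.mod_eq_of_lt j.isLt]
    have adjkey : ∀ i j l : Fin N, i < j → j < l →
        AdjSh N (encf i j) (encf j l) := by
      intro i j l hij hjl
      left
      refine ⟨?_, ?_, ?_⟩
      · rw [hdiv, hmod]; exact hij
      · rw [hdiv, hmod]; exact hjl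
      · rw [hmod, hdiv]
    -- dicoloring gives proper coloring of shift adjacency
    have proper : ∀ v w : Fin (N * N), AdjSh N v w → v ≠ w → col v ≠ col w := by
      intro v w hadj hne hcoleq
      apply hcol
      refine ⟨0, fun i => if i = 0 then v else w, ?_, ?_⟩
      · intro a b hab
        fin_cases a <;> fin_cases b <;> simp_all
      · intro i
        fin_cases i
        · show ((v : ℕ) < (w : ℕ) ∨ AdjSh N v w) ∧ col v = col w
          exact ⟨Or.inr hadj, hcoleq⟩
        · show ((w : ℕ) < (v : ℕ) ∨ AdjSh N w v) ∧ col w = col v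
          exact ⟨Or.inr (adjSh_symm hadj), hcoleq.symm⟩
    -- the color-set map is injective
    set Sset : Fin N → Finset (Fin k) :=
      fun i => (Finset.univ.filter (fun j => i < j)).image (fun j => col (encf i j))
      with hSset
    have Skey : ∀ i j : Fin N, i < j → Sset i ≠ Sset j := by
      intro i j hij heq
      have hmem : col (encf i j) ∈ Sset i :=
        Finset.mem_image.mpr ⟨j, Finset.mem_filter.mpr ⟨Finset.mem_univ _, hij⟩, rfl⟩
      rw [heq] at hmem
      obtain ⟨l, hl, hcoleq⟩ := Finset.mem_image.mp hmem
      have hjl : j < l := (Finset.mem_filter.mp hl).2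
      have hne : encf i j ≠ encf j l := by
        intro he
        have : ((encf i j : Fin (N * N)) : ℕ) / N = ((encf j l : Fin (N * N)) : ℕ) / N := by
          rw [he]
        rw [hdiv, hdiv] at this
        exact absurd (Fin.ext this) (ne_of_lt hij)
      exact proper _ _ (adjkey i j l hij hjl) hne hcoleq.symm
    have Sinj : Function.Injective Sset := by
      intro i j h
      by_contra hne
      rcases lt_or_gt_of_ne hne with hl | hl
      · exact Skey i j hl h
      · exact Skey j i hl h.symm
    have hcard := Fintype.card_le_of_injective Sset Sinj
    rw [Fintype.card_fin, Fintype.card_finset, Fintype.card_fin] at hcard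
    have hpow : (2 : ℕ) ^ k < 2 ^ c := Nat.pow_lt_pow_right (by norm_num) hlt
    omega

/-- For every `c` there is a semicomplete digraph with no `↔K_3`, no induced `→C_3`, and
dichromatic number at least `c`; in particular `{↔K_3, K̄_2, →C_3}` is not heroic. -/
theorem semicomplete_not_heroic :
    (∀ c : ℕ, ∃ (n : ℕ) (A : Fin n → Fin n → Prop), Irreflexive A ∧
      (∀ x y : Fin n, x ≠ y → A x y ∨ A y x) ∧
      ¬ HasInducedCopy A (symK 3) ∧ ¬ HasInducedCopy A dirC3 ∧
      c ≤ dichromaticNumber A) ∧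
    ¬ (∃ c : ℕ, ∀ (n : ℕ) (A : Fin n → Fin n → Prop), Irreflexive A →
      ¬ HasInducedCopy A (symK 3) → ¬ HasInducedCopy A (emptyK 2) →
      ¬ HasInducedCopy A dirC3 → dichromaticNumber A ≤ c) := by
  constructor
  · exact main_construction
  · rintro ⟨c0, hc0⟩
    obtain ⟨n, A, irr, semi, h3, hC3, hχ⟩ := main_construction (c0 + 1)
    have hne2 : ¬ HasInducedCopy A (emptyK 2) := by
      rintro ⟨f, finj, hf⟩
      have hne : f 0 ≠ f 1 := fun h => (by decide : (0 : Fin 2) ≠ 1) (finj h)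
      rcases semi (f 0) (f 1) hne with h | h
      · exact (hf 0 1).mpr h
      · exact (hf 1 0).mpr h
    have := hc0 n A irr h3 hne2 hC3
    omega
end

section
/- For every positive integer c there exists an oriented graph D with dichromatic number exactly c such that D contains no induced directed triangle →C_3 and the underlying undirected graph of D contains no induced path on 4 vertices. -/
section Aux

variable {V W : Type*}

lemma hasDicycle_map {A : V → V → Prop} {B : W → W → Prop} (g : V → W)
    (hg : Function.Injective g) (h : ∀ x y, A x y → B (g x) (g y)) :
    HasDicycle A → HasDicycle B := by
  rintro ⟨n, f, hf, ha⟩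
  exact ⟨n, g ∘ f, hg.comp hf, fun i => h _ _ (ha i)⟩

lemma isDicoloring_of_injective {A : V → V → Prop} {k : ℕ} {c : V → Fin k}
    (hc : Function.Injective c) : IsDicoloring A c := by
  rintro ⟨n, f, hf, ha⟩
  have h0 : f 0 = f (0 + 1) := hc (ha 0).2
  have h1 := hf h0
  simp at h1

/-- The set of valid numbers of colors. -/
def colorSet (A : V → V → Prop) : Set ℕ := {k | ∃ c : V → Fin k, IsDicoloring A c}

lemma dichromaticNumber_eq_sInf (A : V → V → Prop) :
    dichromaticNumber A = sInf (colorSet A) := rfl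

lemma colorSet_mono {A : V → V → Prop} {k k' : ℕ} (h : k ≤ k') (hk : k ∈ colorSet A) :
    k' ∈ colorSet A := by
  obtain ⟨c, hc⟩ := hk
  refine ⟨Fin.castLE h ∘ c, fun hcyc => hc ?_⟩
  refine hasDicycle_map id Function.injective_id (fun x y hxy => ⟨hxy.1, ?_⟩) hcyc
  exact Fin.castLE_injective h hxy.2

lemma card_mem_colorSet [Fintype V] (A : V → V → Prop) :
    Fintype.card V ∈ colorSet A :=
  ⟨Fintype.equivFin V, isDicoloring_of_injective (Fintype.equivFin V).injective⟩

lemma colorSet_nonempty [Fintype V] (A : V → V → Prop) : (colorSet A).Nonempty :=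
  ⟨_, card_mem_colorSet A⟩

lemma dichromaticNumber_eq_iff [Fintype V] {A : V → V → Prop} {k : ℕ} :
    dichromaticNumber A = k ↔ k ∈ colorSet A ∧ ∀ j < k, j ∉ colorSet A := by
  rw [dichromaticNumber_eq_sInf]
  constructor
  · rintro rfl
    exact ⟨Nat.sInf_mem (colorSet_nonempty A), fun j hj => Nat.notMem_of_lt_sInf hj⟩
  · rintro ⟨h1, h2⟩
    refine le_antisymm (Nat.sInf_le h1) ?_
    by_contra h
    push_neg at h
    exact h2 _ h (Nat.sInf_mem (colorSet_nonempty A))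

end Aux
section Step

variable {V : Type*}

/-- The step construction: `k+1` blobs, each a copy of `A` plus one extra "hub" vertex. -/
def stepArc (A : V → V → Prop) (k : ℕ) :
    Fin (k + 1) × Option V → Fin (k + 1) × Option V → Prop := fun x y =>
  match x.2, y.2 with
  | some a, some b => x.1 = y.1 ∧ A a b
  | some _, none => x.1 = y.1
  | none, some _ => x.1 ≠ y.1
  | none, none => False

lemma stepArc_ss {A : V → V → Prop} {k : ℕ} {i j : Fin (k+1)} {a b : V} :
    stepArc A k (i, some a) (j, some b) ↔ i = j ∧ A a b := Iff.rfl

lemma stepArc_sn {A : V → V → Prop} {k : ℕ} {i j : Fin (k+1)} {a : V} :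
    stepArc A k (i, some a) (j, none) ↔ i = j := Iff.rfl

lemma stepArc_ns {A : V → V → Prop} {k : ℕ} {i j : Fin (k+1)} {b : V} :
    stepArc A k (i, none) (j, some b) ↔ i ≠ j := Iff.rfl

lemma stepArc_nn {A : V → V → Prop} {k : ℕ} {i j : Fin (k+1)} :
    stepArc A k (i, none) (j, none) ↔ False := Iff.rfl

lemma step_oriented {A : V → V → Prop} {k : ℕ} (hor : IsOrientedGraph A) :
    IsOrientedGraph (stepArc A k) := by
  rintro ⟨i, _ | a⟩ ⟨j, _ | b⟩ h h'
  · exact h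
  · exact (stepArc_ns.mp h) (stepArc_sn.mp h').symm
  · exact (stepArc_ns.mp h') (stepArc_sn.mp h).symm
  · exact hor _ _ (stepArc_ss.mp h).2 (stepArc_ss.mp h').2

lemma step_mixadj (A : V → V → Prop) (k : ℕ) (i j : Fin (k+1)) (a : V) :
    stepArc A k (i, none) (j, some a) ∨ stepArc A k (j, some a) (i, none) := by
  by_cases h : j = i
  · exact Or.inr (stepArc_sn.mpr h)
  · exact Or.inl (stepArc_ns.mpr (Ne.symm h))

end Step
section StepFree

variable {V : Type*}

lemma step_noC3 {A : V → V → Prop} {k : ℕ} (hc3 : ¬ HasInducedCopy A dirC3) :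
    ¬ HasInducedCopy (stepArc A k) dirC3 := by
  rintro ⟨f, finj, hf⟩
  have h01 : stepArc A k (f 0) (f 1) := (hf 0 1).mp (by unfold dirC3; decide)
  have h12 : stepArc A k (f 1) (f 2) := (hf 1 2).mp (by unfold dirC3; decide)
  have h20 : stepArc A k (f 2) (f 0) := (hf 2 0).mp (by unfold dirC3; decide)
  rcases h0 : f 0 with ⟨i0, _ | a0⟩ <;> rcases h1 : f 1 with ⟨i1, _ | a1⟩ <;>
    rcases h2 : f 2 with ⟨i2, _ | a2⟩ <;>
    rw [h0, h1] at h01 <;> rw [h1, h2] at h12 <;> rw [h2, h0] at h20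
  · exact h01
  · exact h01
  · exact h20
  · exact stepArc_ns.mp h01 ((stepArc_ss.mp h12).1.trans (stepArc_sn.mp h20)).symm
  · exact h12
  · exact stepArc_ns.mp h12 ((stepArc_ss.mp h20).1.trans (stepArc_sn.mp h01)).symm
  · exact stepArc_ns.mp h20 ((stepArc_ss.mp h01).1.trans (stepArc_sn.mp h12)).symm
  · -- all some
    have e01 := (stepArc_ss.mp h01).1
    have e12 := (stepArc_ss.mp h12).1
    subst e01; subst e12
    have key : ∀ x : Fin 3, f x = (i0, some (![a0, a1, a2] x)) := by
      intro x
      fin_cases x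
      · simpa using h0
      · simpa using h1
      · simpa using h2
    apply hc3
    refine ⟨fun x => ![a0, a1, a2] x, ?_, ?_⟩
    · intro s t hst
      have hst' : ![a0, a1, a2] s = ![a0, a1, a2] t := hst
      apply finj
      rw [key s, key t, hst']
    · intro x y
      rw [hf x y, key x, key y, stepArc_ss]
      simp

lemma step_noP4 {A : V → V → Prop} {k : ℕ} (hp4 : ¬ HasInducedUCopy A pathGraph4) :
    ¬ HasInducedUCopy (stepArc A k) pathGraph4 := by
  rintro ⟨f, finj, hf⟩
  have e01 := (hf 0 1).mp (by unfold pathGraph4; decide)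
  have e12 := (hf 1 2).mp (by unfold pathGraph4; decide)
  have e23 := (hf 2 3).mp (by unfold pathGraph4; decide)
  have n02 : ¬ _ := fun h => absurd ((hf 0 2).mpr h) (by unfold pathGraph4; decide)
  have n13 : ¬ _ := fun h => absurd ((hf 1 3).mpr h) (by unfold pathGraph4; decide)
  have n03 : ¬ _ := fun h => absurd ((hf 0 3).mpr h) (by unfold pathGraph4; decide)
  rcases h0 : f 0 with ⟨i0, _ | a0⟩ <;> rcases h1 : f 1 with ⟨i1, _ | a1⟩ <;>
    rcases h2 : f 2 with ⟨i2, _ | a2⟩ <;> rcases h3 : f 3 with ⟨i3, _ | a3⟩ <;>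
    rw [h0, h1] at e01 <;> rw [h1, h2] at e12 <;> rw [h2, h3] at e23 <;>
    rw [h0, h2] at n02 <;> rw [h1, h3] at n13 <;> rw [h0, h3] at n03 <;>
    first
      | exact e01.elim id id
      | exact e12.elim id id
      | exact e23.elim id id
      | exact n02 (step_mixadj A k _ _ _)
      | exact n02 (Or.symm (step_mixadj A k _ _ _))
      | exact n13 (step_mixadj A k _ _ _)
      | exact n13 (Or.symm (step_mixadj A k _ _ _))
      | exact n03 (step_mixadj A k _ _ _)
      | exact n03 (Or.symm (step_mixadj A k _ _ _))
      | skip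
  -- remaining: all some
  have i01 : i0 = i1 := e01.elim (fun h => (stepArc_ss.mp h).1) (fun h => (stepArc_ss.mp h).1.symm)
  have i12 : i1 = i2 := e12.elim (fun h => (stepArc_ss.mp h).1) (fun h => (stepArc_ss.mp h).1.symm)
  have i23 : i2 = i3 := e23.elim (fun h => (stepArc_ss.mp h).1) (fun h => (stepArc_ss.mp h).1.symm)
  subst i01; subst i12; subst i23
  have key : ∀ x : Fin 4, f x = (i0, some (![a0, a1, a2, a3] x)) := by
    intro x
    fin_cases x
    · simpa using h0
    · simpa using h1
    · simpa using h2
    · simpa using h3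
  apply hp4
  refine ⟨fun x => ![a0, a1, a2, a3] x, ?_, ?_⟩
  · intro s t hst
    have hst' : ![a0, a1, a2, a3] s = ![a0, a1, a2, a3] t := hst
    apply finj
    rw [key s, key t, hst']
  · intro x y
    rw [hf x y, key x, key y, stepArc_ss, stepArc_ss]
    simp

end StepFree
section StepChi

variable {V : Type*}

lemma fin_cyclic_const {n : ℕ} {α : Type*} (F : Fin (n + 2) → α)
    (h : ∀ i, F (i + 1) = F i) : ∀ i, F i = F 0 := by
  intro i
  obtain ⟨v, hv⟩ := i
  induction v with
  | zero => rfl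
  | succ w ih =>
      have hw : w < n + 2 := by omega
      have he : (⟨w, hw⟩ : Fin (n + 2)) + 1 = ⟨w + 1, hv⟩ := by
        apply Fin.ext
        simp [Fin.add_def, Nat.mod_eq_of_lt hv, Nat.mod_eq_of_lt hw]
      rw [← he, h, ih hw]

/-- Collapsing an unused color. -/
lemma reduce_coloring {k : ℕ} {A : V → V → Prop} {c : V → Fin (k + 1)}
    (hc : IsDicoloring A c) {y : Fin (k + 1)} (hy : ∀ v, c v ≠ y) :
    ∃ c' : V → Fin k, IsDicoloring A c' := by
  classical
  have hne : ∀ v, (c v).val ≠ y.val := fun v he => hy v (Fin.ext he)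
  refine ⟨fun v => if h : (c v).val < y.val then ⟨(c v).val, by omega⟩
    else ⟨(c v).val - 1, by have h1 := (c v).isLt; have h2 := hne v; omega⟩, ?_⟩
  intro hcyc
  apply hc
  refine hasDicycle_map id Function.injective_id (fun u v huv => ⟨huv.1, ?_⟩) hcyc
  show c u = c v
  have h2 := huv.2
  beta_reduce at h2
  apply Fin.ext
  have hu := hne u; have hv := hne v
  have h1u := (c u).isLt; have h1v := (c v).isLt
  split_ifs at h2 with hA hB hB <;>
    simp only [Fin.mk.injEq] at h2 <;> omega

lemma step_dichromatic [Fintype V] {A : V → V → Prop} {k : ℕ}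
    (hchi : dichromaticNumber A = k) (hk : 1 ≤ k) :
    dichromaticNumber (stepArc A k) = k + 1 := by
  obtain ⟨hmem, hlt⟩ := dichromaticNumber_eq_iff.mp hchi
  rw [dichromaticNumber_eq_iff]
  constructor
  · -- upper bound : a (k+1)-dicoloring
    obtain ⟨c0, hc0⟩ := hmem
    refine ⟨fun x => match x.2 with
      | some a => (c0 a).castSucc
      | none => Fin.last k, ?_⟩
    rintro ⟨n, f, hf, ha⟩
    set C : Fin (k + 1) × Option V → Fin (k + 1) := fun x => match x.2 with
      | some a => (c0 a).castSucc
      | none => Fin.last k with hC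
    have hsome : ∀ i, ((f i).2).isSome := by
      intro i
      rw [Option.isSome_iff_ne_none]
      intro hnone
      obtain ⟨hstep, hcol⟩ := ha i
      rcases hb : (f (i + 1)).2 with _ | b
      · -- both none : no arc
        have h1 : f i = ((f i).1, none) := by rw [← hnone]
        have h2 : f (i + 1) = ((f (i + 1)).1, none) := by rw [← hb]
        rw [h1, h2] at hstep
        exact hstep
      · -- colors differ
        have c1 : C (f i) = Fin.last k := by simp only [hC]; rw [hnone]
        have c2 : C (f (i + 1)) = (c0 b).castSucc := by simp only [hC]; rw [hb]
        rw [c1, c2] at hcol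
        exact absurd hcol.symm (Fin.castSucc_lt_last (c0 b)).ne
    set g : Fin (n + 2) → V := fun i => ((f i).2).get (hsome i) with hg
    have hfg : ∀ i, (f i).2 = some (g i) := fun i => (Option.some_get (hsome i)).symm
    have harc : ∀ i, ((f i).1 = (f (i + 1)).1 ∧ A (g i) (g (i + 1))) ∧
        c0 (g i) = c0 (g (i + 1)) := by
      intro i
      obtain ⟨hstep, hcol⟩ := ha i
      have h1 : f i = ((f i).1, some (g i)) := by rw [← hfg i]
      have h2 : f (i + 1) = ((f (i + 1)).1, some (g (i + 1))) := by rw [← hfg (i + 1)]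
      rw [h1, h2] at hstep
      rw [h1, h2] at hcol
      refine ⟨stepArc_ss.mp hstep, ?_⟩
      have : (c0 (g i)).castSucc = (c0 (g (i + 1))).castSucc := hcol
      exact Fin.castSucc_injective k this
    have hconst : ∀ i, (f i).1 = (f 0).1 :=
      fin_cyclic_const (fun i => (f i).1) (fun i => ((harc i).1).1.symm)
    apply hc0
    refine ⟨n, g, ?_, fun i => ⟨(harc i).1.2, (harc i).2⟩⟩
    intro s t hst
    apply hf
    have : f s = ((f s).1, (f s).2) := rfl
    rw [this, hfg s, hconst s, show f t = ((f t).1, (f t).2) from rfl, hfg t, hconst t, hst]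
  · -- lower bound
    intro j hj hjmem
    have hkmem : k ∈ colorSet (stepArc A k) := colorSet_mono (by omega) hjmem
    obtain ⟨c, hc⟩ := hkmem
    obtain ⟨k', rfl⟩ : ∃ k', k = k' + 1 := ⟨k - 1, by omega⟩
    have hsurj : ∀ i : Fin (k' + 2), Function.Surjective (fun a => c (i, some a)) := by
      intro i
      by_contra hns
      rw [Function.Surjective] at hns
      push_neg at hns
      obtain ⟨y, hy⟩ := hns
      have hci : IsDicoloring A (fun a => c (i, some a)) := by
        intro hcyc
        apply hc
        refine hasDicycle_map (fun a => (i, some a)) ?_ ?_ hcyc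
        · intro u v huv
          simpa using huv
        · intro u v huv
          exact ⟨stepArc_ss.mpr ⟨rfl, huv.1⟩, huv.2⟩
      obtain ⟨c', hc'⟩ := reduce_coloring hci hy
      exact hlt k' (by omega) ⟨c', hc'⟩
    set x : Fin (k' + 2) → Fin (k' + 1) := fun i => c (i, none) with hx
    have xinj : Function.Injective x := by
      intro i j hij
      by_contra hne
      obtain ⟨a, ha⟩ := hsurj i (x i)
      obtain ⟨b, hb⟩ := hsurj j (x j)
      have ha' : c (i, some a) = x i := ha
      have hb' : c (j, some b) = x j := hb
      apply hc
      refine ⟨2, ![(i, some a), (i, none), (j, some b), (j, none)], ?_, ?_⟩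
      · intro s t hst
        fin_cases s <;> fin_cases t <;>
          simp_all [Prod.ext_iff] <;> exact hne (by assumption)
      · intro t
        fin_cases t
        · exact ⟨stepArc_sn.mpr rfl, ha'⟩
        · refine ⟨stepArc_ns.mpr hne, ?_⟩
          show c (i, none) = c (j, some b)
          rw [hb']
          exact hij
        · exact ⟨stepArc_sn.mpr rfl, hb'⟩
        · refine ⟨stepArc_ns.mpr (Ne.symm hne), ?_⟩
          show c (j, none) = c (i, some a)
          rw [ha']
          exact hij.symm
    have hcard := Fintype.card_le_of_injective x xinj
    simp at hcard

end StepChi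
section Transfer

variable {V W : Type*}

/-- Transporting a digraph along an equivalence. -/
def relMap (e : V ≃ W) (A : V → V → Prop) : W → W → Prop :=
  fun x y => A (e.symm x) (e.symm y)

lemma relMap_colorSet (e : V ≃ W) (A : V → V → Prop) :
    colorSet (relMap e A) = colorSet A := by
  ext k
  constructor
  · rintro ⟨c, hc⟩
    refine ⟨c ∘ e, fun hcyc => hc ?_⟩
    refine hasDicycle_map e e.injective (fun u v huv => ⟨?_, huv.2⟩) hcyc
    show A (e.symm (e u)) (e.symm (e v))
    simpa using huv.1
  · rintro ⟨c, hc⟩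
    refine ⟨c ∘ e.symm, fun hcyc => hc ?_⟩
    exact hasDicycle_map e.symm e.symm.injective (fun u v huv => ⟨huv.1, huv.2⟩) hcyc

lemma relMap_dichromatic (e : V ≃ W) (A : V → V → Prop) :
    dichromaticNumber (relMap e A) = dichromaticNumber A := by
  rw [dichromaticNumber_eq_sInf, dichromaticNumber_eq_sInf, relMap_colorSet]

lemma relMap_oriented (e : V ≃ W) {A : V → V → Prop} (h : IsOrientedGraph A) :
    IsOrientedGraph (relMap e A) :=
  fun x y hxy hyx => h _ _ hxy hyx

lemma relMap_noCopy (e : V ≃ W) {A : V → V → Prop} {X : Type*} {B : X → X → Prop}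
    (h : ¬ HasInducedCopy A B) : ¬ HasInducedCopy (relMap e A) B := by
  rintro ⟨f, finj, hf⟩
  exact h ⟨fun x => e.symm (f x), e.symm.injective.comp finj, hf⟩

lemma relMap_noUCopy (e : V ≃ W) {A : V → V → Prop} {X : Type*} {B : X → X → Prop}
    (h : ¬ HasInducedUCopy A B) : ¬ HasInducedUCopy (relMap e A) B := by
  rintro ⟨f, finj, hf⟩
  exact h ⟨fun x => e.symm (f x), e.symm.injective.comp finj, hf⟩

end Transfer

theorem exists_oriented_no_C3_no_P4' (c : ℕ) (hc : 0 < c) :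
    ∃ (n : ℕ) (A : Fin n → Fin n → Prop), IsOrientedGraph A ∧
      dichromaticNumber A = c ∧
      ¬ HasInducedCopy A dirC3 ∧
      ¬ HasInducedUCopy A pathGraph4 := by
  induction c with
  | zero => omega
  | succ c ih =>
    rcases Nat.eq_zero_or_pos c with rfl | hcpos
    · -- base case : one vertex, no arcs
      refine ⟨1, fun _ _ => False, fun _ _ h => h.elim, ?_, ?_, ?_⟩
      · rw [dichromaticNumber_eq_iff]
        refine ⟨⟨fun _ => 0, ?_⟩, ?_⟩
        · rintro ⟨n, f, hf, ha⟩
          exact (ha 0).1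
        · intro j hj hjmem
          interval_cases j
          obtain ⟨c0, _⟩ := hjmem
          exact (c0 0).elim0
      · rintro ⟨f, _, hf⟩
        exact (hf 0 1).mp (by unfold dirC3; decide)
      · rintro ⟨f, _, hf⟩
        exact ((hf 0 1).mp (by unfold pathGraph4; decide)).elim id id
    · obtain ⟨m, A, hor, hchi, hc3, hp4⟩ := ih hcpos
      let T := Fin (c + 1) × Option (Fin m)
      let e : T ≃ Fin (Fintype.card T) := Fintype.equivFin T
      refine ⟨Fintype.card T, relMap e (stepArc A c), relMap_oriented e (step_oriented hor),
        ?_, relMap_noCopy e (step_noC3 hc3), relMap_noUCopy e (step_noP4 hp4)⟩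
      rw [relMap_dichromatic]
      exact step_dichromatic hchi hcpos

/-- For every positive integer `c` there is an oriented graph with dichromatic number
exactly `c`, no induced `→C_3`, and no induced path on 4 vertices in its underlying graph. -/
theorem exists_oriented_no_C3_no_P4 (c : ℕ) (hc : 0 < c) :
    ∃ (n : ℕ) (A : Fin n → Fin n → Prop), IsOrientedGraph A ∧
      dichromaticNumber A = c ∧
      ¬ HasInducedCopy A dirC3 ∧
      ¬ HasInducedUCopy A pathGraph4 := by
  exact exists_oriented_no_C3_no_P4' c hc
end

section
/- Let H be a digraph containing the directed triangle →C_3 as a subdigraph and let F be an oriented forest whose underlying undirected graph contains an induced path on 4 vertices. Then the set {↔K_2, H, F} is not heroic: for every integer c there exists an oriented graph with no induced copy of H and no induced copy of F whose dichromatic number exceeds c. -/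
namespace NH

def step {m : ℕ} {V : Type} (A : V → V → Prop) :
    (Fin m × V) ⊕ Fin m → (Fin m × V) ⊕ Fin m → Prop
  | Sum.inl (i, u), Sum.inl (j, v) => i = j ∧ A u v
  | Sum.inl (i, _), Sum.inr a => i = a
  | Sum.inr a, Sum.inl (j, _) => a ≠ j
  | Sum.inr _, Sum.inr _ => False

def NoC3 {V : Type*} (A : V → V → Prop) : Prop :=
  ∀ x y z, A x y → A y z → A z x → False

def NoP4 {V : Type*} (A : V → V → Prop) : Prop :=
  ∀ f : Fin 4 → V, Function.Injective f →
    ¬ (∀ x y, pathGraph4 x y ↔ (A (f x) (f y) ∨ A (f y) (f x)))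

def Uncol {V : Type*} (A : V → V → Prop) (k : ℕ) : Prop :=
  ∀ col : V → Fin k, HasDicycle (fun x y => A x y ∧ col x = col y)

def Vt : ℕ → Type
  | 0 => Unit
  | k+1 => (Fin (k+2) × Vt k) ⊕ Fin (k+2)

def Ar : (k : ℕ) → Vt k → Vt k → Prop
  | 0, _, _ => False
  | k+1, x, y => step (Ar k) x y

def VtFT : (k : ℕ) → Fintype (Vt k)
  | 0 => inferInstanceAs (Fintype Unit)
  | k+1 => letI := VtFT k; inferInstanceAs (Fintype ((Fin (k+2) × Vt k) ⊕ Fin (k+2)))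

theorem stepOriented {m : ℕ} {V : Type} {A : V → V → Prop} (h : IsOrientedGraph A) :
    IsOrientedGraph (step (m := m) A) := by
  rintro (⟨i,u⟩|a) (⟨j,v⟩|b) hxy hyx <;> simp only [step] at hxy hyx <;>
  first
    | exact h u v hxy.2 (by cases hxy.1; exact hyx.2)
    | exact hyx hxy.symm
    | exact hxy hyx.symm

theorem stepNoC3 {m : ℕ} {V : Type} {A : V → V → Prop} (h : NoC3 A) :
    NoC3 (step (m := m) A) := by
  rintro (⟨i,u⟩|a) (⟨j,v⟩|b) (⟨l,w⟩|c) h1 h2 h3 <;>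
    simp only [step] at h1 h2 h3 <;>
  first
    | (cases h1.1; cases h2.1; exact h u v w h1.2 h2.2 h3.2)
    | (cases h1.1; exact h3 h2.symm)
    | (cases h3.1; exact h2 h1.symm)
    | (cases h2.1; exact h1 h3.symm)

theorem stepNoP4 {m : ℕ} {V : Type} {A : V → V → Prop} (h : NoP4 A) :
    NoP4 (step (m := m) A) := by
  intro f finj hiff
  have hnot : ∀ x y : Fin 4, ¬ pathGraph4 x y → ∀ a, f x = Sum.inr a →
      ∃ b, f y = Sum.inr b := by
    intro x y hxy a hfx
    cases hy : f y with
    | inr b => exact ⟨b, rfl⟩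
    | inl p =>
      exfalso
      apply hxy
      rw [hiff x y, hfx, hy]
      by_cases hja : a = p.1
      · right
        show step A (Sum.inl p) (Sum.inr a)
        obtain ⟨j, v⟩ := p
        exact hja.symm
      · left
        exact hja
  cases hf0 : f 0 with
  | inr a =>
    obtain ⟨b, hf2⟩ := hnot 0 2 (by simp only [pathGraph4]; decide) a hf0
    obtain ⟨c, hf3⟩ := hnot 0 3 (by simp only [pathGraph4]; decide) a hf0
    have h23 := (hiff 2 3).mp (by simp only [pathGraph4]; decide)
    rw [hf2, hf3] at h23
    simp only [step] at h23
    exact h23.elim id id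
  | inl p0 =>
  cases hf3 : f 3 with
  | inr a =>
    obtain ⟨b, hf0'⟩ := hnot 3 0 (by simp only [pathGraph4]; decide) a hf3
    rw [hf0] at hf0'
    exact absurd hf0' (by simp)
  | inl p3 =>
  cases hf1 : f 1 with
  | inr a =>
    obtain ⟨b, hf3'⟩ := hnot 1 3 (by simp only [pathGraph4]; decide) a hf1
    rw [hf3] at hf3'
    exact absurd hf3' (by simp)
  | inl p1 =>
  cases hf2 : f 2 with
  | inr a =>
    obtain ⟨b, hf0'⟩ := hnot 2 0 (by simp only [pathGraph4]; decide) a hf2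
    rw [hf0] at hf0'
    exact absurd hf0' (by simp)
  | inl p2 =>
  obtain ⟨i0, u0⟩ := p0
  obtain ⟨i1, u1⟩ := p1
  obtain ⟨i2, u2⟩ := p2
  obtain ⟨i3, u3⟩ := p3
  have adj01 := (hiff 0 1).mp (by simp only [pathGraph4]; decide)
  rw [hf0, hf1] at adj01
  have e01 : i0 = i1 := by
    rcases adj01 with h' | h' <;> simp only [step] at h'
    exacts [h'.1, h'.1.symm]
  have adj12 := (hiff 1 2).mp (by simp only [pathGraph4]; decide)
  rw [hf1, hf2] at adj12
  have e12 : i1 = i2 := by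
    rcases adj12 with h' | h' <;> simp only [step] at h'
    exacts [h'.1, h'.1.symm]
  have adj23 := (hiff 2 3).mp (by simp only [pathGraph4]; decide)
  rw [hf2, hf3] at adj23
  have e23 : i2 = i3 := by
    rcases adj23 with h' | h' <;> simp only [step] at h'
    exacts [h'.1, h'.1.symm]
  subst e01; subst e12; subst e23
  set g : Fin 4 → V := ![u0, u1, u2, u3] with hg
  have hfs : ∀ s : Fin 4, f s = Sum.inl (i0, g s) := by
    intro s
    fin_cases s <;> simp [hg] <;> assumption
  have ginj : Function.Injective g := by
    intro s t hst
    apply finj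
    rw [hfs s, hfs t, hst]
  exact h g ginj (fun x y => (hiff x y).trans (by rw [hfs x, hfs y]; simp [step]))

theorem HasDicycle.map {V W : Type*} {R : V → V → Prop} {S : W → W → Prop}
    (g : V → W) (hg : Function.Injective g) (harc : ∀ x y, R x y → S (g x) (g y)) :
    HasDicycle R → HasDicycle S := by
  rintro ⟨n, f, finj, hf⟩
  exact ⟨n, g ∘ f, hg.comp finj, fun i => harc _ _ (hf i)⟩

theorem stepChrom {k : ℕ} {V : Type} {A : V → V → Prop} (h : Uncol A k) :
    Uncol (step (m := k + 2) A) (k + 1) := by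
  intro col
  by_contra hno
  -- every copy contains every color
  have hcopy : ∀ (i : Fin (k + 2)) (t : Fin (k + 1)), ∃ u, col (Sum.inl (i, u)) = t := by
    intro i t
    by_contra hc
    push_neg at hc
    have spec : ∀ u : V, t.succAbove (Fin.exists_succAbove_eq (hc u)).choose
        = col (Sum.inl (i, u)) :=
      fun u => (Fin.exists_succAbove_eq (hc u)).choose_spec
    have := h (fun u => (Fin.exists_succAbove_eq (hc u)).choose)
    apply hno
    refine HasDicycle.map (fun u => Sum.inl (i, u)) (fun a b hab => by
      simpa using hab) ?_ this
    rintro x y ⟨hxy, hcol⟩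
    refine ⟨⟨rfl, hxy⟩, ?_⟩
    rw [← spec x, ← spec y, hcol]
  obtain ⟨a, b, hab, hcab⟩ :=
    Fintype.exists_ne_map_eq_of_card_lt (fun a : Fin (k + 2) => col (Sum.inr a))
      (by simp)
  obtain ⟨u, hu⟩ := hcopy b (col (Sum.inr a))
  obtain ⟨v, hv⟩ := hcopy a (col (Sum.inr a))
  apply hno
  refine ⟨2, ![Sum.inr a, Sum.inl (b, u), Sum.inr b, Sum.inl (a, v)], ?_, ?_⟩
  · intro s t hst
    fin_cases s <;> fin_cases t <;> simp_all
  · intro i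
    fin_cases i <;>
      refine ⟨?_, ?_⟩ <;>
      simp [step, hu, hv, hcab, Ne.symm hab, hab]

theorem dig_props : ∀ k : ℕ,
    IsOrientedGraph (Ar k) ∧ NoC3 (Ar k) ∧ NoP4 (Ar k) ∧ Uncol (Ar k) k := by
  intro k
  induction k with
  | zero =>
    refine ⟨fun x y h => h.elim, fun x y z h => h.elim, ?_, ?_⟩
    · intro f finj _
      have h01 : f 0 = f 1 := Subsingleton.elim (α := Unit) (f 0) (f 1)
      exact absurd (finj h01) (by decide)
    · intro col
      exact (col (() : Unit)).elim0
  | succ k ih =>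
    exact ⟨stepOriented ih.1, stepNoC3 ih.2.1, stepNoP4 ih.2.2.1, stepChrom ih.2.2.2⟩

end NH

/-- If `H` contains a directed triangle as a subdigraph and `F` is an oriented forest whose
underlying graph has an induced path on 4 vertices, then `{↔K_2, H, F}` is not heroic. -/
theorem not_heroic_C3_P4 {h m : ℕ} (H : Fin h → Fin h → Prop) (F : Fin m → Fin m → Prop)
    (hHirr : Irreflexive H)
    (hHC3 : ∃ x y z : Fin h, x ≠ y ∧ y ≠ z ∧ x ≠ z ∧ H x y ∧ H y z ∧ H z x)
    (hFor : IsOrientedGraph F)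
    (hFforest : (underlyingGraph F).IsAcyclic)
    (hFP4 : HasInducedUCopy F pathGraph4) :
    ∀ c : ℕ, ∃ (n : ℕ) (A : Fin n → Fin n → Prop), IsOrientedGraph A ∧
      ¬ HasInducedCopy A H ∧ ¬ HasInducedCopy A F ∧ c < dichromaticNumber A := by
  intro c
  classical
  obtain ⟨hOr, hC3, hP4, hUn⟩ := NH.dig_props c
  letI : Fintype (NH.Vt c) := NH.VtFT c
  set n := Fintype.card (NH.Vt c) with hn
  let e : NH.Vt c ≃ Fin n := Fintype.equivFin _
  refine ⟨n, fun x y => NH.Ar c (e.symm x) (e.symm y), ?_, ?_, ?_, ?_⟩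
  · intro x y hxy hyx
    exact hOr _ _ hxy hyx
  · rintro ⟨f, finj, hf⟩
    obtain ⟨x, y, z, _, _, _, hxy, hyz, hzx⟩ := hHC3
    exact hC3 _ _ _ ((hf x y).mp hxy) ((hf y z).mp hyz) ((hf z x).mp hzx)
  · rintro ⟨g, ginj, hg⟩
    obtain ⟨p, pinj, hp⟩ := hFP4
    refine hP4 (fun t => e.symm (g (p t))) (e.symm.injective.comp (ginj.comp pinj)) ?_
    intro x y
    refine (hp x y).trans ?_
    constructor
    · rintro (hF | hF)
      · exact Or.inl ((hg _ _).mp hF)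
      · exact Or.inr ((hg _ _).mp hF)
    · rintro (hA | hA)
      · exact Or.inl ((hg _ _).mpr hA)
      · exact Or.inr ((hg _ _).mpr hA)
  · have hSne : n ∈ {k : ℕ | ∃ col : Fin n → Fin k,
        IsDicoloring (fun x y => NH.Ar c (e.symm x) (e.symm y)) col} := by
      refine ⟨id, ?_⟩
      rintro ⟨m', f, finj, hf⟩
      obtain ⟨hA, hid⟩ := hf 0
      have h01 : f 0 = f (0 + 1) := hid
      rw [← h01] at hA
      exact hOr _ _ hA hA
    have hall : ∀ k ∈ {k : ℕ | ∃ col : Fin n → Fin k,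
        IsDicoloring (fun x y => NH.Ar c (e.symm x) (e.symm y)) col}, c < k := by
      rintro k ⟨col, hcol⟩
      by_contra hkc
      push_neg at hkc
      have hdc := hUn (fun v => Fin.castLE hkc (col (e v)))
      apply hcol
      refine NH.HasDicycle.map e e.injective ?_ hdc
      rintro x y ⟨hxy, hcv⟩
      refine ⟨by simpa using hxy, ?_⟩
      have hval := congrArg Fin.val hcv
      exact Fin.ext (by simpa using hval)
    exact hall _ (Nat.sInf_mem ⟨n, hSne⟩)
end

section
/- Every oriented graph with no induced directed triangle →C_3 and no induced copy of →K_2 + K_1 (the disjoint union of a single arc and an isolated vertex) has dichromatic number at most 2; moreover there exists such an oriented graph with dichromatic number exactly 2 (for instance the directed 4-cycle), so the maximum dichromatic number over this class equals 2. -/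
section Aux

variable {V : Type*} {A : V → V → Prop}

def Adjj (A : V → V → Prop) (x y : V) : Prop := A x y ∨ A y x

lemma adjj_symm {x y : V} (h : Adjj A x y) : Adjj A y x := h.symm

lemma noLoop (h : IsOrientedGraph A) (x : V) : ¬ A x x := fun hx => h x x hx hx

lemma noC3' (h : IsOrientedGraph A) (hC3 : ¬ HasInducedCopy A dirC3)
    {x y z : V} (hxy : A x y) (hyz : A y z) (hzx : A z x) : False := by
  apply hC3
  have hxy' : x ≠ y := by rintro rfl; exact noLoop h x hxy
  have hyz' : y ≠ z := by rintro rfl; exact noLoop h y hyz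
  have hzx' : z ≠ x := by rintro rfl; exact noLoop h z hzx
  refine ⟨![x, y, z], ?_, ?_⟩
  · intro a b hab
    fin_cases a <;> fin_cases b <;> simp_all <;> tauto
  · intro a b
    fin_cases a <;> fin_cases b <;>
      simp [dirC3, hxy, hyz, hzx, noLoop h x, noLoop h y, noLoop h z,
        h x y hxy, h y z hyz, h z x hzx]

lemma multi3 (h : IsOrientedGraph A) (hK : ¬ HasInducedCopy A K2plusK1)
    {x y z : V} (hxy : Adjj A x y) (hxz : ¬ Adjj A x z) (hyz : ¬ Adjj A y z) : False := by
  have key : ∀ a b : V, A a b → ¬ Adjj A a z → ¬ Adjj A b z → False := by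
    intro a b hab haz hbz
    apply hK
    have hab' : a ≠ b := by rintro rfl; exact noLoop h a hab
    have hza : z ≠ a := by rintro rfl; exact hbz (Or.inr hab)
    have hzb : z ≠ b := by rintro rfl; exact haz (Or.inl hab)
    refine ⟨![a, b, z], ?_, ?_⟩
    · intro i j hij
      fin_cases i <;> fin_cases j <;> simp_all <;> tauto
    · intro i j
      have h1 : ¬ A a z := fun hh => haz (Or.inl hh)
      have h2 : ¬ A z a := fun hh => haz (Or.inr hh)
      have h3 : ¬ A b z := fun hh => hbz (Or.inl hh)
      have h4 : ¬ A z b := fun hh => hbz (Or.inr hh)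
      fin_cases i <;> fin_cases j <;>
        simp [K2plusK1, hab, h1, h2, h3, h4, noLoop h a, noLoop h b, noLoop h z, h a b hab]
  rcases hxy with h1 | h1
  · exact key x y h1 hxz hyz
  · exact key y x h1 hyz hxz

lemma simil_trans (h : IsOrientedGraph A) (hK : ¬ HasInducedCopy A K2plusK1)
    {x y z : V} (hxy : ¬ Adjj A x y) (hyz : ¬ Adjj A y z) : ¬ Adjj A x z := by
  intro hxz
  exact multi3 h hK hxz hxy (fun hh => hyz (adjj_symm hh))

end Aux

section Core

variable {V : Type*} {A : V → V → Prop}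

lemma reach_path {a b : V} (h : Relation.ReflTransGen A a b) :
    ∃ (k : ℕ) (u : ℕ → V), u 0 = a ∧ u k = b ∧ ∀ i < k, A (u i) (u (i+1)) := by
  induction h with
  | refl => exact ⟨0, fun _ => a, rfl, rfl, by omega⟩
  | @tail b c hab hbc ih =>
    obtain ⟨k, u, h0, hk, harc⟩ := ih
    refine ⟨k + 1, fun i => if i ≤ k then u i else c, by simp [h0], by simp, ?_⟩
    intro i hi
    rcases Nat.lt_or_ge i k with hik | hik
    · simpa [Nat.le_of_lt hik, Nat.succ_le_of_lt hik] using harc i hik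
    · have : i = k := by omega
      subst this
      simpa [hk] using hbc

lemma core (h : IsOrientedGraph A) (hC3 : ¬ HasInducedCopy A dirC3)
    (hK : ¬ HasInducedCopy A K2plusK1) {s m t : V}
    (hsm : A s m) (hmt : A m t) (hst : A s t)
    (hr : Relation.ReflTransGen A t s) : False := by
  classical
  set P : ℕ → Prop := fun k => ∃ u : ℕ → V, u 0 = t ∧ u k = s ∧ ∀ i < k, A (u i) (u (i+1))
    with hP
  have hex : ∃ k, P k := by
    obtain ⟨k, u, h0, hk, harc⟩ := reach_path hr
    exact ⟨k, u, h0, hk, harc⟩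
  set k₀ := Nat.find hex with hk₀
  obtain ⟨u, hu0, huk, harc⟩ := Nat.find_spec hex
  have hmin : ∀ j, j < k₀ → ¬ P j := fun j hj => Nat.find_min hex hj
  have hne : t ≠ s := by
    rintro rfl
    exact h m t hmt hsm
  have hk1 : 1 ≤ k₀ := by
    rcases Nat.eq_zero_or_pos k₀ with h0 | h0
    · exact absurd (hu0 ▸ h0 ▸ huk : t = s) hne
    · exact h0
  -- no chords of distance two
  have hchord : ∀ i, i + 2 ≤ k₀ → ¬ Adjj A (u i) (u (i+2)) := by
    intro i h2 hadj
    rcases hadj with hf | hb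
    · -- forward chord: shorter path
      apply hmin (k₀ - 1) (by omega)
      refine ⟨fun j => if j ≤ i then u j else u (j+1), by simp [hu0], ?_, ?_⟩
      · have : ¬ (k₀ - 1 ≤ i) := by omega
        simp only [this, if_false]
        rw [show k₀ - 1 + 1 = k₀ by omega, huk]
      · intro j hj
        rcases Nat.lt_trichotomy j i with hji | hji | hji
        · simpa [Nat.le_of_lt hji, Nat.succ_le_of_lt hji] using harc j (by omega)
        · subst hji
          have : ¬ (j + 1 ≤ j) := by omega
          simpa [this] using hf
        · have h1 : ¬ (j ≤ i) := by omega
          have h2' : ¬ (j + 1 ≤ i) := by omega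
          simpa [h1, h2'] using harc (j+1) (by omega)
    · exact noC3' h hC3 (harc i (by omega)) (harc (i+1) (by omega)) hb
  -- alternation: every path vertex is similar to u 0 or u 1
  have hQ : ∀ i, i ≤ k₀ → ¬ Adjj A (u i) (u 0) ∨ ¬ Adjj A (u i) (u 1) := by
    intro i
    induction i using Nat.strong_induction_on with
    | _ i ih =>
      intro hik
      match i with
      | 0 => exact Or.inl (fun hadj => by
          rcases hadj with hh | hh <;> exact noLoop h _ hh)
      | 1 => exact Or.inr (fun hadj => by
          rcases hadj with hh | hh <;> exact noLoop h _ hh)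
      | (j+2) =>
        have hsim : ¬ Adjj A (u j) (u (j+2)) := hchord j hik
        rcases ih j (by omega) (by omega) with hc | hc
        · exact Or.inl (simil_trans h hK (fun hh => hsim (adjj_symm hh)) hc)
        · exact Or.inr (simil_trans h hK (fun hh => hsim (adjj_symm hh)) hc)
  have hs1 : ¬ Adjj A s (u 1) := by
    rcases hQ k₀ le_rfl with hc | hc
    · rw [huk, hu0] at hc
      exact absurd (Or.inl hst : Adjj A s t) hc
    · rwa [huk] at hc
  -- m is adjacent to every path vertex
  have hmadj : ∀ i, i ≤ k₀ → Adjj A m (u i) := by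
    intro i hik
    by_contra hns
    rcases hQ i hik with hc | hc
    · rw [hu0] at hc
      exact (simil_trans h hK hns hc) (Or.inl hmt)
    · have : ¬ Adjj A (u 1) s := fun hh => hs1 (adjj_symm hh)
      exact (simil_trans h hK (simil_trans h hK hns hc) this) (Or.inl hsm).symm
  -- m dominates the whole path
  have hclimb : ∀ i, i ≤ k₀ → A m (u i) := by
    intro i
    induction i with
    | zero => intro _; rw [hu0]; exact hmt
    | succ i ih =>
      intro hik
      have hmi := ih (by omega)
      rcases hmadj (i+1) hik with hf | hb
      · exact hf
      · exact absurd hb (fun hb' => noC3' h hC3 hmi (harc i (by omega)) hb')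
  exact h s m hsm (huk ▸ hclimb k₀ le_rfl)

lemma three (h : IsOrientedGraph A) (hC3 : ¬ HasInducedCopy A dirC3)
    (hK : ¬ HasInducedCopy A K2plusK1) {x y z : V}
    (hxy : Adjj A x y) (hyz : Adjj A y z) (hxz : Adjj A x z)
    (rxy : Relation.ReflTransGen A x y) (ryx : Relation.ReflTransGen A y x)
    (ryz : Relation.ReflTransGen A y z) (rzy : Relation.ReflTransGen A z y)
    (rxz : Relation.ReflTransGen A x z) (rzx : Relation.ReflTransGen A z x) : False := by
  rcases hxy with h1 | h1 <;> rcases hyz with h2 | h2 <;> rcases hxz with h3 | h3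
  · exact core h hC3 hK h1 h2 h3 rzx
  · exact noC3' h hC3 h1 h2 h3
  · exact core h hC3 hK h3 h2 h1 ryx
  · exact core h hC3 hK h3 h1 h2 ryz
  · exact core h hC3 hK h1 h3 h2 rzy
  · exact core h hC3 hK h2 h3 h1 rxy
  · exact noC3' h hC3 h3 h2 h1
  · exact core h hC3 hK h2 h1 h3 rxz

end Core

section Coloring

variable {V : Type*} {A : V → V → Prop}

open Fin.NatCast in
lemma exists_coloring (h : IsOrientedGraph A) (hC3 : ¬ HasInducedCopy A dirC3)
    (hK : ¬ HasInducedCopy A K2plusK1) : ∃ c : V → Fin 2, IsDicoloring A c := by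
  classical
  letI σ : Setoid V := ⟨fun a b => Relation.ReflTransGen A a b ∧ Relation.ReflTransGen A b a,
    ⟨fun a => ⟨.refl, .refl⟩, fun hab => ⟨hab.2, hab.1⟩,
     fun hab hbc => ⟨hab.1.trans hbc.1, hbc.2.trans hab.2⟩⟩⟩
  set rep : V → V := fun v => (Quotient.mk σ v).out with hrep
  have hrep1 : ∀ v, Relation.ReflTransGen A (rep v) v ∧ Relation.ReflTransGen A v (rep v) :=
    fun v => Quotient.exact (Quotient.out_eq (Quotient.mk σ v))
  have hrep2 : ∀ u v, (Relation.ReflTransGen A u v ∧ Relation.ReflTransGen A v u) →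
      rep u = rep v := fun u v huv => congrArg Quotient.out (Quotient.sound huv)
  refine ⟨fun v => if Adjj A v (rep v) then 1 else 0, ?_⟩
  rintro ⟨n, f, hinj, harc⟩
  have hstep : ∀ i, A (f i) (f (i+1)) := fun i => (harc i).1
  have hreach' : ∀ (d : ℕ) (i : Fin (n+2)),
      Relation.ReflTransGen A (f i) (f (i + (d : Fin (n+2)))) := by
    intro d
    induction d with
    | zero => intro i; simp; exact .refl
    | succ d ih =>
      intro i
      have hc : ((d+1 : ℕ) : Fin (n+2)) = (d : Fin (n+2)) + 1 := by push_cast; ring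
      rw [hc, ← add_assoc]
      exact (ih i).tail (hstep (i + (d : Fin (n+2))))
  have hreach : ∀ i j : Fin (n+2), Relation.ReflTransGen A (f i) (f j) := by
    intro i j
    have := hreach' (j - i).val i
    rwa [Fin.cast_val_eq_self, show i + (j - i) = j by abel] at this
  set r := rep (f 0) with hr
  have hrepf : ∀ i, rep (f i) = r := fun i => hrep2 _ _ ⟨hreach i 0, hreach 0 i⟩
  have h01 : A (f 0) (f 1) := by have := hstep 0; rwa [zero_add] at this
  have hcol : (if Adjj A (f 0) r then (1:Fin 2) else 0)
      = (if Adjj A (f 1) r then (1:Fin 2) else 0) := by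
    have := (harc 0).2
    simp only [zero_add] at this
    rwa [hrepf 0, hrepf 1] at this
  have hadj01 : Adjj A (f 0) (f 1) := Or.inl h01
  have hr0 : Relation.ReflTransGen A r (f 0) ∧ Relation.ReflTransGen A (f 0) r := by
    rw [hr]; exact ⟨(hrep1 (f 0)).1, (hrep1 (f 0)).2⟩
  by_cases h0r : Adjj A (f 0) r <;> by_cases h1r : Adjj A (f 1) r
  · exact three h hC3 hK hadj01 h1r h0r
      (hreach 0 1) (hreach 1 0)
      ((hreach 1 0).trans hr0.2) (hr0.1.trans (hreach 0 1))
      hr0.2 hr0.1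
  · simp [h0r, h1r] at hcol
  · simp [h0r, h1r] at hcol
  · exact (simil_trans h hK h0r (fun hh => h1r (adjj_symm hh))) hadj01

end Coloring

section C4

def C4 : Fin 4 → Fin 4 → Prop := fun x y => (y : ℕ) = ((x : ℕ) + 1) % 4

lemma c4_oriented : IsOrientedGraph C4 := by
  intro x y hxy hyx
  have h1 := x.isLt
  have h2 := y.isLt
  simp only [C4] at hxy hyx
  omega

lemma c4_noC3 : ¬ HasInducedCopy C4 dirC3 := by
  rintro ⟨f, hinj, hiff⟩
  have h01 : C4 (f 0) (f 1) := (hiff 0 1).mp (by norm_num [dirC3])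
  have h12 : C4 (f 1) (f 2) := (hiff 1 2).mp (by norm_num [dirC3])
  have h20 : C4 (f 2) (f 0) := (hiff 2 0).mp (by norm_num [dirC3])
  simp only [C4] at h01 h12 h20
  have e0 := (f 0).isLt
  have e1 := (f 1).isLt
  have e2 := (f 2).isLt
  omega

lemma c4_noK2K1 : ¬ HasInducedCopy C4 K2plusK1 := by
  rintro ⟨f, hinj, hiff⟩
  have h01 : C4 (f 0) (f 1) := (hiff 0 1).mp ⟨rfl, rfl⟩
  have h02 : ¬ C4 (f 0) (f 2) := fun hh => by
    have := (hiff 0 2).mpr hh; exact absurd this.2 (by decide)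
  have h20 : ¬ C4 (f 2) (f 0) := fun hh => by
    have := (hiff 2 0).mpr hh; exact absurd this.1 (by decide)
  have h12 : ¬ C4 (f 1) (f 2) := fun hh => by
    have := (hiff 1 2).mpr hh; exact absurd this.2 (by decide)
  have h21 : ¬ C4 (f 2) (f 1) := fun hh => by
    have := (hiff 2 1).mpr hh; exact absurd this.1 (by decide)
  have hne02 : f 0 ≠ f 2 := fun e => absurd (hinj e) (by decide)
  have hne12 : f 1 ≠ f 2 := fun e => absurd (hinj e) (by decide)
  simp only [C4] at h01 h02 h20 h12 h21
  have e0 := (f 0).isLt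
  have e1 := (f 1).isLt
  have e2 := (f 2).isLt
  have v02 : (f 0 : ℕ) ≠ (f 2 : ℕ) := fun e => hne02 (Fin.ext e)
  have v12 : (f 1 : ℕ) ≠ (f 2 : ℕ) := fun e => hne12 (Fin.ext e)
  omega

lemma c4_no_one (k : ℕ) (hk : k ≤ 1) (c : Fin 4 → Fin k) : ¬ IsDicoloring C4 c := by
  intro hdc
  apply hdc
  refine ⟨2, id, Function.injective_id, ?_⟩
  intro i
  constructor
  · show C4 i (i + 1)
    simp only [C4, Fin.val_add]
    have := i.isLt
    omega
  · interval_cases k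
    · exact (c 0).elim0
    · exact Subsingleton.elim _ _

lemma c4_two : ∃ c : Fin 4 → Fin 2, IsDicoloring C4 c := by
  refine ⟨fun v => ⟨v.val % 2, by omega⟩, ?_⟩
  rintro ⟨n, f, hinj, harc⟩
  obtain ⟨harc0, hcol0⟩ := harc 0
  have h1 : ((f (0 + 1) : Fin 4) : ℕ) = ((f 0 : ℕ) + 1) % 4 := harc0
  have h2 : (f 0 : ℕ) % 2 = ((f (0 + 1)) : ℕ) % 2 := congrArg Fin.val hcol0
  have := (f 0).isLt
  have := (f (0+1)).isLt
  omega

lemma c4_dichromatic : dichromaticNumber C4 = 2 := by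
  obtain ⟨c, hc⟩ := c4_two
  apply le_antisymm
  · apply Nat.sInf_le
    exact ⟨c, hc⟩
  · apply le_csInf
    · exact ⟨2, c, hc⟩
    · rintro k ⟨c', hc'⟩
      by_contra hlt
      exact c4_no_one k (by omega) c' hc'

end C4


/-- Every oriented graph with no induced `→C_3` and no induced `→K_2 + K_1` has dichromatic
number at most 2, and this is attained, so the maximum over the class equals 2. -/
theorem dichromatic_no_C3_no_K2K1 :
    (∀ (n : ℕ) (A : Fin n → Fin n → Prop), IsOrientedGraph A →
      ¬ HasInducedCopy A dirC3 → ¬ HasInducedCopy A K2plusK1 →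
      dichromaticNumber A ≤ 2) ∧
    (∃ (n : ℕ) (A : Fin n → Fin n → Prop), IsOrientedGraph A ∧
      ¬ HasInducedCopy A dirC3 ∧ ¬ HasInducedCopy A K2plusK1 ∧
      dichromaticNumber A = 2) := by
  constructor
  · intro n A hor hc3 hk
    obtain ⟨c, hc⟩ := exists_coloring hor hc3 hk
    apply Nat.sInf_le
    exact ⟨c, hc⟩
  · exact ⟨4, C4, c4_oriented, c4_noC3, c4_noK2K1, c4_dichromatic⟩
end

section
/- Let D be a round oriented graph, i.e., an oriented graph whose vertices can be cyclically ordered v_1, …, v_n so that whenever v_i v_j is an arc, then v_i v_k and v_k v_j are also arcs for every index k lying cyclically strictly between i and j. Then the dichromatic number of D is at most 2. -/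
/-- Every round oriented graph (there is a cyclic ordering of the vertices so that whenever
`xy` is an arc, `xz` and `zy` are arcs for every `z` cyclically strictly between `x` and `y`)
has dichromatic number at most 2. -/
theorem round_dichromatic_le_two {V : Type*} [Fintype V] (A : V → V → Prop)
    (hor : IsOrientedGraph A)
    (hround : ∃ (n : ℕ) (e : V ≃ Fin n),
      ∀ x y z : V, A x y →
        (0 < ((e z : ℕ) + n - (e x : ℕ)) % n ∧
          ((e z : ℕ) + n - (e x : ℕ)) % n < ((e y : ℕ) + n - (e x : ℕ)) % n) →
        A x z ∧ A z y) :
    dichromaticNumber A ≤ 2 := by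
  classical
  obtain ⟨n, e, hr⟩ := hround
  apply Nat.sInf_le
  refine ⟨fun v => if ∃ u, A v u ∧ (e u : ℕ) < (e v : ℕ) then 0 else 1, ?_⟩
  rintro ⟨m, f, hinj, hcyc⟩
  have npos : 0 < n := Nat.lt_of_le_of_lt (Nat.zero_le _) (e (f 0)).isLt
  set z : V := e.symm ⟨0, npos⟩ with hzdef
  have hz : (e z : ℕ) = 0 := by simp [hzdef]
  -- every vertex with a backward out-arc sends an arc to z
  have toz : ∀ v : V, (∃ u, A v u ∧ (e u : ℕ) < (e v : ℕ)) → A v z := by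
    rintro v ⟨u, hvu, huv⟩
    rcases Nat.eq_zero_or_pos (e u : ℕ) with h0 | h0
    · have : u = z := by
        rw [hzdef]
        apply e.injective
        rw [Equiv.apply_symm_apply]
        exact Fin.ext h0
      rwa [this] at hvu
    · have hv1 : (e v : ℕ) < n := (e v).isLt
      have hv0 : 0 < (e v : ℕ) := lt_trans h0 huv
      have := hr v u z hvu ?_
      · exact this.1
      · constructor
        · rw [hz]
          rw [Nat.mod_eq_of_lt (by omega)]
          omega
        · rw [hz]
          rw [Nat.mod_eq_of_lt (by omega : 0 + n - (e v : ℕ) < n),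
            Nat.mod_eq_of_lt (by omega : (e u : ℕ) + n - (e v : ℕ) < n)]
          omega
  -- key: monochromatic arcs strictly increase position
  have key : ∀ a b : V, A a b →
      ((∃ u, A a u ∧ (e u : ℕ) < (e a : ℕ)) ↔ (∃ u, A b u ∧ (e u : ℕ) < (e b : ℕ))) →
      (e a : ℕ) < (e b : ℕ) := by
    intro a b hab hiff
    have hne : a ≠ b := fun h => hor a b hab (h ▸ hab)
    have hene : (e a : ℕ) ≠ (e b : ℕ) := fun h => hne (e.injective (Fin.ext h))
    by_contra hcon
    have hba : (e b : ℕ) < (e a : ℕ) := by omega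
    have ha : ∃ u, A a u ∧ (e u : ℕ) < (e a : ℕ) := ⟨b, hab, hba⟩
    have hb := hiff.mp ha
    obtain ⟨u, hbu, hub⟩ := hb
    have hbz : A b z := toz b ⟨u, hbu, hub⟩
    have hb0 : 0 < (e b : ℕ) := Nat.lt_of_le_of_lt (Nat.zero_le _) hub
    have ha1 : (e a : ℕ) < n := (e a).isLt
    have hzb : A z b := by
      have := hr a b z hab ?_
      · exact this.2
      · rw [hz]
        constructor
        · rw [Nat.mod_eq_of_lt (by omega : 0 + n - (e a : ℕ) < n)]
          omega
        · rw [Nat.mod_eq_of_lt (by omega : 0 + n - (e a : ℕ) < n),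
            Nat.mod_eq_of_lt (by omega : (e b : ℕ) + n - (e a : ℕ) < n)]
          omega
    exact hor z b hzb hbz
  -- arcs of the cycle strictly increase position
  have hlt : ∀ i : Fin (m + 2), (e (f i) : ℕ) < (e (f (i + 1)) : ℕ) := by
    intro i
    obtain ⟨harc, hcol⟩ := hcyc i
    apply key _ _ harc
    by_cases h1 : ∃ u, A (f i) u ∧ (e u : ℕ) < (e (f i) : ℕ) <;>
      by_cases h2 : ∃ u, A (f (i+1)) u ∧ (e u : ℕ) < (e (f (i+1)) : ℕ) <;>
      simp only [h1, h2, if_true, if_false, if_pos, if_neg, not_false_iff] at hcol ⊢ <;>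
      first
        | tauto
        | exact absurd hcol (by decide)
  have mono : ∀ j : ℕ, ∀ h : j < m + 2, (e (f 0) : ℕ) ≤ (e (f ⟨j, h⟩) : ℕ) := by
    intro j
    induction j with
    | zero =>
      intro h
      have : (⟨0, h⟩ : Fin (m + 2)) = 0 := rfl
      rw [this]
    | succ j ih =>
      intro h
      have hj : j < m + 2 := Nat.lt_of_succ_lt h
      have hstep := hlt ⟨j, hj⟩
      have heq : (⟨j, hj⟩ + 1 : Fin (m + 2)) = ⟨j + 1, h⟩ := by
        apply Fin.ext
        rw [Fin.add_def]
        simp only [Fin.val_one]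
        exact Nat.mod_eq_of_lt h
      rw [heq] at hstep
      exact le_trans (ih hj) (le_of_lt hstep)
  have hlast := hlt ⟨m + 1, Nat.lt_succ_self _⟩
  have heq0 : (⟨m + 1, Nat.lt_succ_self _⟩ + 1 : Fin (m + 2)) = 0 := by
    apply Fin.ext
    rw [Fin.add_def]
    simp only [Fin.val_one, Fin.val_zero]
    exact Nat.mod_self (m + 2)
  rw [heq0] at hlast
  have := mono (m + 1) (Nat.lt_succ_self _)
  exact absurd (lt_of_le_of_lt this hlast) (lt_irrefl _)
end

section
/- Every oriented graph with no induced directed triangle →C_3, no induced copy of S_2^+ (the oriented star on three vertices with two arcs leaving the center), and no induced copy of S_2^- (the oriented star on three vertices with two arcs entering the center) has dichromatic number at most 2. -/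
section DicolorAux

open Fin.NatCast Fin.CommRing

universe u

lemma inj3 {V : Type*} {x a b : V} (h1 : x ≠ a) (h2 : x ≠ b) (h3 : a ≠ b) :
    Function.Injective ![x, a, b] := by
  intro i j hij
  fin_cases i <;> fin_cases j <;> simp_all

/-- A set of pairwise adjacent vertices in a digon-free, triangle-free digraph
contains no directed cycle. -/
lemma clique_no_cycle {V : Type*} {A : V → V → Prop}
    (hdig : ∀ x y, A x y → ¬ A y x)
    (htri : ∀ x y z, A x y → A y z → A z x → False)
    {m : ℕ} (f : Fin (m + 2) → V)
    (hinj : Function.Injective f)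
    (harc : ∀ i, A (f i) (f (i + 1)))
    (hadj : ∀ i j : Fin (m + 2), f i ≠ f j → A (f i) (f j) ∨ A (f j) (f i)) :
    False := by
  have key : ∀ k : ℕ, k ≤ m → A (f 0) (f ((k + 1 : ℕ) : Fin (m + 2))) := by
    intro k
    induction k with
    | zero =>
      intro _
      have e : ((0 + 1 : ℕ) : Fin (m + 2)) = 0 + 1 := by norm_num
      rw [e]; exact harc 0
    | succ k ih =>
      intro hk
      have h1 : A (f 0) (f ((k + 1 : ℕ) : Fin (m + 2))) := ih (by omega)
      have h2 := harc ((k + 1 : ℕ) : Fin (m + 2))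
      have e : ((k + 1 : ℕ) : Fin (m + 2)) + 1 = ((k + 1 + 1 : ℕ) : Fin (m + 2)) := by
        push_cast; ring
      rw [e] at h2
      have hne : f ((k + 1 + 1 : ℕ) : Fin (m + 2)) ≠ f 0 := by
        intro he
        have h := hinj he
        have hv : (((k + 1 + 1 : ℕ) : Fin (m + 2)) : ℕ) = k + 1 + 1 :=
          Fin.val_cast_of_lt (by omega)
        rw [h] at hv
        simp at hv
      rcases hadj _ _ hne with h3 | h3
      · exact (htri _ _ _ h1 h2 h3).elim
      · exact h3
  have hfin : A (f 0) (f ((m + 1 : ℕ) : Fin (m + 2))) := key m le_rfl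
  have hlast := harc ((m + 1 : ℕ) : Fin (m + 2))
  have e2 : ((m + 1 : ℕ) : Fin (m + 2)) + 1 = 0 := by
    have e3 : ((m + 1 : ℕ) : Fin (m + 2)) + 1 = ((m + 2 : ℕ) : Fin (m + 2)) := by
      push_cast; ring
    rw [e3, Fin.natCast_self]
  rw [e2] at hlast
  exact hdig _ _ hfin hlast

/-- On a directed cycle visiting both a vertex satisfying `Q` and a vertex not
satisfying `Q`, some arc leaves the set `Q`. -/
lemma cyc_boundary {V : Type*} {m : ℕ} (f : Fin (m + 2) → V) (Q : V → Prop)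
    {i0 j0 : Fin (m + 2)} (hj : Q (f j0)) (hi : ¬ Q (f i0)) :
    ∃ i, Q (f i) ∧ ¬ Q (f (i + 1)) := by
  by_contra h
  simp only [not_exists, not_and, not_not] at h
  have step : ∀ k : ℕ, Q (f (j0 + (k : Fin (m + 2)))) := by
    intro k
    induction k with
    | zero => simpa using hj
    | succ k ih =>
      have e : j0 + ((k + 1 : ℕ) : Fin (m + 2)) = (j0 + (k : Fin (m + 2))) + 1 := by
        push_cast; ring
      rw [e]
      exact h _ ih
  have h2 := step ((i0 - j0).val)
  rw [Fin.cast_val_eq_self] at h2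
  have e3 : j0 + (i0 - j0) = i0 := by ring
  rw [e3] at h2
  exact hi h2

/-- Core lemma: a finite digraph with no digon, no directed triangle, in which any two
out-neighbors and any two in-neighbors of a vertex are adjacent, admits a 2-dicoloring. -/
lemma dicolor_core : ∀ (n : ℕ) (V : Type u) [Fintype V] (A : V → V → Prop),
    Fintype.card V ≤ n →
    (∀ x y, A x y → ¬ A y x) →
    (∀ x y z, A x y → A y z → A z x → False) →
    (∀ x a b, A x a → A x b → a ≠ b → A a b ∨ A b a) →
    (∀ x a b, A a x → A b x → a ≠ b → A a b ∨ A b a) →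
    ∃ c : V → Fin 2, IsDicoloring A c := by
  intro n
  induction n with
  | zero =>
    intro V _ A hcard _ _ _ _
    have hemp : IsEmpty V := by
      rw [← Fintype.card_eq_zero_iff]; omega
    exact ⟨fun _ => 0, by rintro ⟨m, f, -, -⟩; exact hemp.false (f 0)⟩
  | succ n IH =>
    intro V _ A hcard hdig htri hout hin
    classical
    by_cases hne : Nonempty V
    swap
    · exact ⟨fun _ => 0, by rintro ⟨m, f, -, -⟩; exact hne ⟨f 0⟩⟩
    obtain ⟨v0⟩ := hne
    -- the non-neighbors of v0
    set Zp : V → Prop := fun v => ¬ (A v0 v ∨ v = v0) ∧ ¬ A v v0 with hZp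
    have hcardZ : Fintype.card {v // Zp v} ≤ n := by
      have hlt : Fintype.card {v // Zp v} < Fintype.card V :=
        Fintype.card_subtype_lt (x := v0) (by simp [hZp])
      omega
    obtain ⟨cZ, hcZ⟩ := IH {v // Zp v} (fun a b => A a.1 b.1) hcardZ
      (fun a b h => hdig _ _ h)
      (fun a b c h1 h2 h3 => htri _ _ _ h1 h2 h3)
      (fun x a b h1 h2 hab => hout x.1 a.1 b.1 h1 h2 (fun e => hab (Subtype.ext e)))
      (fun x a b h1 h2 hab => hin x.1 a.1 b.1 h1 h2 (fun e => hab (Subtype.ext e)))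
    set c : V → Fin 2 := fun v =>
      if h1 : A v0 v ∨ v = v0 then 0
      else if h2 : A v v0 then 1
      else cZ ⟨v, h1, h2⟩ with hc
    have hcP : ∀ v, (A v0 v ∨ v = v0) → c v = 0 := by
      intro v h; rw [hc]; exact dif_pos h
    have hcM : ∀ v, ¬ (A v0 v ∨ v = v0) → A v v0 → c v = 1 := by
      intro v h1 h2; rw [hc]; simp only [dif_neg h1]; exact dif_pos h2
    have hcZv : ∀ v (h : Zp v), c v = cZ ⟨v, h⟩ := by
      intro v h; rw [hc]; simp only [dif_neg h.1, dif_neg h.2]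
    refine ⟨c, ?_⟩
    rintro ⟨m, f, hinj, harc⟩
    have hconst : ∀ i, c (f i) = c (f 0) := by
      have hnat : ∀ k : ℕ, c (f ((k : ℕ) : Fin (m + 2))) = c (f 0) := by
        intro k
        induction k with
        | zero => norm_num
        | succ k ih =>
          have e : ((k + 1 : ℕ) : Fin (m + 2)) = ((k : ℕ) : Fin (m + 2)) + 1 := by
            push_cast; ring
          rw [e, ← (harc ((k : ℕ) : Fin (m + 2))).2, ih]
      intro i
      rw [← Fin.cast_val_eq_self i]
      exact hnat i.val
    -- characterize colors
    have hc0 : ∀ x, c x = 0 → (A v0 x ∨ x = v0) ∨ Zp x := by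
      intro x hx
      by_cases h1 : A v0 x ∨ x = v0
      · exact Or.inl h1
      by_cases h2 : A x v0
      · rw [hcM x h1 h2] at hx; exact absurd hx (by decide)
      · exact Or.inr ⟨h1, h2⟩
    have hc1 : ∀ x, c x = 1 → ¬ (A v0 x ∨ x = v0) ∧ (A x v0 ∨ Zp x) := by
      intro x hx
      by_cases h1 : A v0 x ∨ x = v0
      · rw [hcP x h1] at hx; exact absurd hx (by decide)
      by_cases h2 : A x v0
      · exact ⟨h1, Or.inl h2⟩
      · exact ⟨h1, Or.inr ⟨h1, h2⟩⟩
    -- if all vertices of the cycle are non-neighbors, contradict the recursive coloring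
    have hallZcase : (∀ i, Zp (f i)) → False := by
      intro hallZ
      apply hcZ
      refine ⟨m, fun i => ⟨f i, hallZ i⟩, ?_, ?_⟩
      · intro i j hij
        exact hinj (congrArg Subtype.val hij)
      · intro i
        refine ⟨(harc i).1, ?_⟩
        have e1 := hcZv (f i) (hallZ i)
        have e2 := hcZv (f (i + 1)) (hallZ (i + 1))
        rw [← e1, ← e2]
        exact (harc i).2
    have h01 : ∀ t : Fin 2, t = 0 ∨ t = 1 := by decide
    rcases h01 (c (f 0)) with h0 | h0
    · -- color 0 : in {v0} ∪ N⁺(v0) or in Z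
      have hmem : ∀ i, (A v0 (f i) ∨ f i = v0) ∨ Zp (f i) := by
        intro i; exact hc0 _ ((hconst i).trans h0)
      by_cases hallZ : ∀ i, Zp (f i)
      · exact hallZcase hallZ
      push_neg at hallZ
      obtain ⟨i0, hi0⟩ := hallZ
      by_cases hsomeZ : ∃ j, Zp (f j)
      · obtain ⟨j0, hj0⟩ := hsomeZ
        obtain ⟨i, hiZ, hiP⟩ := cyc_boundary f Zp hj0 hi0
        have harcZ := (harc i).1
        rcases (hmem (i + 1)).resolve_right hiP with h | h
        · -- A v0 (f (i+1)) and A (f i) (f (i+1)) : two in-neighbors of f (i+1)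
          have hne2 : f i ≠ v0 := fun e => hiZ.1 (Or.inr e)
          rcases hin (f (i + 1)) (f i) v0 harcZ h hne2 with h' | h'
          · exact hiZ.2 h'
          · exact hiZ.1 (Or.inl h')
        · -- f (i+1) = v0 : arc into v0 from a non-neighbor
          exact hiZ.2 (h ▸ harcZ)
      · -- all vertices in {v0} ∪ N⁺(v0)
        push_neg at hsomeZ
        have hP : ∀ i, A v0 (f i) ∨ f i = v0 := fun i =>
          (hmem i).resolve_right (hsomeZ i)
        have hNout : ∀ i, A v0 (f i) := by
          intro i
          rcases hP i with h | h
          · exact h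
          · exfalso
            have harc' := (harc (i - 1)).1
            have e : (i - 1) + 1 = i := by ring
            rw [e, h] at harc'
            rcases hP (i - 1) with h2 | h2
            · exact hdig _ _ h2 harc'
            · have hne3 : i - 1 ≠ i := by
                intro he
                have h4 : (1 : Fin (m + 2)) = 0 := sub_eq_self.1 he
                simp at h4
              exact hne3 (hinj (h2.trans h.symm))
        exact clique_no_cycle hdig htri f hinj (fun i => (harc i).1)
          (fun i j hne' => hout v0 (f i) (f j) (hNout i) (hNout j) hne')
    · -- color 1 : in N⁻(v0) or in Z
      have hmem : ∀ i, ¬ (A v0 (f i) ∨ f i = v0) ∧ (A (f i) v0 ∨ Zp (f i)) := by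
        intro i; exact hc1 _ ((hconst i).trans h0)
      by_cases hallZ : ∀ i, Zp (f i)
      · exact hallZcase hallZ
      push_neg at hallZ
      obtain ⟨i0, hi0⟩ := hallZ
      by_cases hsomeZ : ∃ j, Zp (f j)
      · obtain ⟨j0, hj0⟩ := hsomeZ
        obtain ⟨i, hiM, hiZ⟩ :=
          cyc_boundary f (fun v => ¬ Zp v) hi0 (not_not_intro hj0)
        rw [not_not] at hiZ
        have hM : A (f i) v0 := ((hmem i).2).resolve_right hiM
        have harcZ := (harc i).1
        have hne2 : v0 ≠ f (i + 1) := fun e => hiZ.1 (Or.inr e.symm)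
        rcases hout (f i) v0 (f (i + 1)) hM harcZ hne2 with h' | h'
        · exact hiZ.1 (Or.inl h')
        · exact hiZ.2 h'
      · push_neg at hsomeZ
        have hNin : ∀ i, A (f i) v0 := fun i => ((hmem i).2).resolve_right (hsomeZ i)
        exact clique_no_cycle hdig htri f hinj (fun i => (harc i).1)
          (fun i j hne' => hin v0 (f i) (f j) (hNin i) (hNin j) hne')

end DicolorAux

/-- Every oriented graph with no induced `→C_3`, no induced `S_2^+` and no induced `S_2^-`
has dichromatic number at most 2. -/
theorem dichromatic_no_C3_no_S2 {V : Type*} [Fintype V] (A : V → V → Prop)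
    (hor : IsOrientedGraph A)
    (hC3 : ¬ HasInducedCopy A dirC3)
    (hSp : ¬ HasInducedCopy A S2plus)
    (hSm : ¬ HasInducedCopy A S2minus) :
    dichromaticNumber A ≤ 2 := by
  have hirr : ∀ x, ¬ A x x := fun x hx => hor x x hx hx
  have htri : ∀ x y z, A x y → A y z → A z x → False := by
    intro x y z h1 h2 h3
    apply hC3
    refine ⟨![x, y, z], inj3 (fun e => hirr y (e ▸ h1)) (fun e => hor y z h2 (e ▸ h1))
      (fun e => hirr z (e ▸ h2)), ?_⟩
    intro i j
    fin_cases i <;> fin_cases j <;>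
      simp [dirC3] <;>
      first
        | exact h1 | exact h2 | exact h3
        | exact hirr _ | exact hor _ _ h1 | exact hor _ _ h2 | exact hor _ _ h3
  have hout : ∀ x a b, A x a → A x b → a ≠ b → A a b ∨ A b a := by
    intro x a b h1 h2 hab
    by_contra hcon
    push_neg at hcon
    apply hSp
    refine ⟨![x, a, b], inj3 (fun e => hirr a (e ▸ h1)) (fun e => hirr b (e ▸ h2)) hab, ?_⟩
    intro i j
    fin_cases i <;> fin_cases j <;>
      simp [S2plus] <;>
      first
        | exact h1 | exact h2
        | exact hirr _ | exact hor _ _ h1 | exact hor _ _ h2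
        | exact hcon.1 | exact hcon.2
  have hin : ∀ x a b, A a x → A b x → a ≠ b → A a b ∨ A b a := by
    intro x a b h1 h2 hab
    by_contra hcon
    push_neg at hcon
    apply hSm
    refine ⟨![x, a, b], inj3 (fun e => hirr a (e.symm ▸ h1))
      (fun e => hirr b (e.symm ▸ h2)) hab, ?_⟩
    intro i j
    fin_cases i <;> fin_cases j <;>
      simp [S2minus] <;>
      first
        | exact h1 | exact h2
        | exact hirr _ | exact hor _ _ h1 | exact hor _ _ h2
        | exact hcon.1 | exact hcon.2
  obtain ⟨c, hc⟩ := dicolor_core (Fintype.card V) V A le_rfl hor htri hout hin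
  exact Nat.sInf_le ⟨c, hc⟩
end

section
/- Let 𝓒 be a hereditary class of digraphs (closed under taking induced subdigraphs) and let c_1, c_2 be integers such that every nonempty digraph in 𝓒 contains a nice set S whose in-part induces a subdigraph of dichromatic number at most c_1 and whose out-part induces a subdigraph of dichromatic number at most c_2. Then every digraph in 𝓒 has dichromatic number at most c_1 + c_2. -/
lemma hasDicycle_mono {V : Type*} {R R' : V → V → Prop} (h : ∀ x y, R x y → R' x y) :
    HasDicycle R → HasDicycle R' := by
  rintro ⟨n, f, hf, ha⟩
  exact ⟨n, f, hf, fun i => h _ _ (ha i)⟩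

lemma exists_dicoloring_of_le {V : Type*} [Fintype V] {A : V → V → Prop} {k : ℕ}
    (h : dichromaticNumber A ≤ k) : ∃ c : V → Fin k, IsDicoloring A c := by
  have hne : ({j : ℕ | ∃ c : V → Fin j, IsDicoloring A c}).Nonempty := by
    refine ⟨Fintype.card V, fun v => Fintype.equivFin V v, ?_⟩
    rintro ⟨m, f, hinj, harc⟩
    have h01 : f 0 = f 1 := (Fintype.equivFin V).injective (harc 0).2
    have := hinj h01
    have h1 : ((1 : Fin (m + 2)) : ℕ) = 1 := by simp [Fin.val_one]
    have h0 : ((0 : Fin (m + 2)) : ℕ) = 0 := rfl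
    rw [Fin.ext_iff] at this
    omega
  have hmem := Nat.sInf_mem hne
  obtain ⟨c, hc⟩ := hmem
  have hle : sInf {j : ℕ | ∃ c : V → Fin j, IsDicoloring A c} ≤ k := h
  refine ⟨fun v => Fin.castLE hle (c v), ?_⟩
  intro hd
  exact hc (hasDicycle_mono (fun x y hxy => ⟨hxy.1, Fin.castLE_injective hle hxy.2⟩) hd)

open Fin.NatCast in
lemma cycle_propagate {k : ℕ} (P : Fin (k + 2) → Prop) (hstep : ∀ i, P i → P (i + 1))
    {i₀ : Fin (k + 2)} (h₀ : P i₀) : ∀ i, P i := by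
  have aux : ∀ j : ℕ, P (i₀ + (j : Fin (k + 2))) := by
    intro j
    induction j with
    | zero => simpa using h₀
    | succ j ih =>
      have hcast : ((j + 1 : ℕ) : Fin (k + 2)) = (j : Fin (k + 2)) + 1 := by push_cast; ring
      rw [hcast, ← add_assoc]
      exact hstep _ ih
  intro i
  have := aux (i - i₀).val
  rwa [Fin.cast_val_eq_self, show i₀ + (i - i₀) = i from by abel] at this

/-- If every nonempty digraph of a hereditary class `𝓒` contains a nice set whose in-part
has dichromatic number at most `c₁` and whose out-part has dichromatic number at most `c₂`,
then every digraph in `𝓒` has dichromatic number at most `c₁ + c₂`. -/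
theorem nice_set_bound (C : ∀ n : ℕ, (Fin n → Fin n → Prop) → Prop)
    (hdigraph : ∀ (n : ℕ) (A : Fin n → Fin n → Prop), C n A → Irreflexive A)
    (hhered : ∀ (n : ℕ) (A : Fin n → Fin n → Prop), C n A →
      ∀ (m : ℕ) (B : Fin m → Fin m → Prop),
        (∃ f : Fin m → Fin n, Function.Injective f ∧ ∀ x y, B x y ↔ A (f x) (f y)) → C m B)
    (c₁ c₂ : ℕ)
    (hnice : ∀ (n : ℕ) (A : Fin n → Fin n → Prop), C n A → 0 < n →
      ∃ S : Set (Fin n), S.Nonempty ∧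
        (∀ v ∈ S, (∀ w, w ∉ S → ¬ A v w) ∨ (∀ w, w ∉ S → ¬ A w v)) ∧
        dichromaticNumber
          (fun x y : {v : Fin n // v ∈ S ∧ ∀ w, w ∉ S → ¬ A v w} => A x.1 y.1) ≤ c₁ ∧
        dichromaticNumber
          (fun x y : {v : Fin n // v ∈ S ∧ ∀ w, w ∉ S → ¬ A w v} => A x.1 y.1) ≤ c₂) :
    ∀ (n : ℕ) (A : Fin n → Fin n → Prop), C n A → dichromaticNumber A ≤ c₁ + c₂ := by
  intro n
  induction n using Nat.strong_induction_on with
  | _ n IH =>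
  intro A hA
  classical
  rcases Nat.eq_zero_or_pos n with rfl | hn
  · exact Nat.sInf_le ⟨fun v => v.elim0, by rintro ⟨m, f, -, -⟩; exact (f 0).elim0⟩
  obtain ⟨S, hSne, hS2, hc1, hc2⟩ := hnice n A hA hn
  haveI : Fintype {v : Fin n // v ∈ S ∧ ∀ w, w ∉ S → ¬ A v w} := Fintype.ofFinite _
  haveI : Fintype {v : Fin n // v ∈ S ∧ ∀ w, w ∉ S → ¬ A w v} := Fintype.ofFinite _
  haveI : Fintype {v : Fin n // v ∉ S} := Fintype.ofFinite _
  obtain ⟨cIn, hcIn⟩ := exists_dicoloring_of_le hc1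
  obtain ⟨cOut, hcOut⟩ := exists_dicoloring_of_le hc2
  set m := Fintype.card {v : Fin n // v ∉ S} with hm_def
  let e : {v : Fin n // v ∉ S} ≃ Fin m := Fintype.equivFin _
  let B : Fin m → Fin m → Prop := fun x y => A (e.symm x).1 (e.symm y).1
  have hCB : C m B :=
    hhered n A hA m B ⟨fun x => (e.symm x).1,
      Subtype.coe_injective.comp e.symm.injective, fun _ _ => Iff.rfl⟩
  have hm : m < n := by
    obtain ⟨v, hv⟩ := hSne
    have := Fintype.card_subtype_lt (p := fun v : Fin n => v ∉ S) (x := v) (not_not_intro hv)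
    rw [Fintype.card_fin] at this
    rw [hm_def]
    convert this using 2
  obtain ⟨cB, hcB⟩ := exists_dicoloring_of_le (IH m hm B hCB)
  let c : Fin n → Fin (c₁ + c₂) := fun v =>
    if hv : v ∈ S then
      if hin : ∀ w, w ∉ S → ¬ A v w then Fin.castAdd c₂ (cIn ⟨v, hv, hin⟩)
      else Fin.natAdd c₁ (cOut ⟨v, hv, (hS2 v hv).resolve_left hin⟩)
    else cB (e ⟨v, hv⟩)
  have hcB' : ∀ v (hv : v ∉ S), c v = cB (e ⟨v, hv⟩) := fun v hv => dif_neg hv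
  have hcIn' : ∀ v (hv : v ∈ S) (hin : ∀ w, w ∉ S → ¬ A v w),
      c v = Fin.castAdd c₂ (cIn ⟨v, hv, hin⟩) := by
    intro v hv hin
    show dite _ _ _ = _
    rw [dif_pos hv, dif_pos hin]
  have hcOut' : ∀ v (hv : v ∈ S) (hin : ¬ ∀ w, w ∉ S → ¬ A v w),
      c v = Fin.natAdd c₁ (cOut ⟨v, hv, (hS2 v hv).resolve_left hin⟩) := by
    intro v hv hin
    show dite _ _ _ = _
    rw [dif_pos hv, dif_neg hin]
  refine Nat.sInf_le ⟨c, ?_⟩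
  rintro ⟨k, f, hinj, harc⟩
  have hcol : ∀ i, c (f i) = c (f 0) :=
    cycle_propagate _ (fun i hi => ((harc i).2.symm.trans hi)) rfl
  by_cases hall : ∀ i, f i ∉ S
  · refine hcB ⟨k, fun i => e ⟨f i, hall i⟩, ?_, ?_⟩
    · intro a b h
      exact hinj (congrArg Subtype.val (e.injective h))
    · intro i
      refine ⟨?_, ?_⟩
      · show A (e.symm (e ⟨f i, hall i⟩)).1 (e.symm (e ⟨f (i + 1), hall (i + 1)⟩)).1
        simpa using (harc i).1
      · rw [← hcB' _ (hall i), ← hcB' _ (hall (i + 1))]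
        exact (harc i).2
  · push_neg at hall
    obtain ⟨i₀, hi₀⟩ := hall
    by_cases hlt : (c (f i₀)).val < c₁
    · -- in-part case: colors in the first block
      have hzone : ∀ i, f i ∈ S → ∀ w, w ∉ S → ¬ A (f i) w := by
        intro i hi
        by_contra hin
        have h1 := hcOut' _ hi hin
        have hc0 : c (f i) = c (f i₀) := (hcol i).trans (hcol i₀).symm
        rw [h1] at hc0
        have := congrArg Fin.val hc0
        simp [Fin.natAdd] at this
        omega
      by_cases hallS : ∀ i, f i ∈ S
      · refine hcIn ⟨k, fun i => ⟨f i, hallS i, hzone i (hallS i)⟩, ?_, ?_⟩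
        · intro a b h
          exact hinj (congrArg Subtype.val h)
        · intro i
          refine ⟨(harc i).1, ?_⟩
          have h1 := hcIn' _ (hallS i) (hzone i (hallS i))
          have h2 := hcIn' _ (hallS (i + 1)) (hzone (i + 1) (hallS (i + 1)))
          have h3 := (harc i).2
          rw [h1, h2] at h3
          exact Fin.ext (by simpa using congrArg Fin.val h3)
      · push_neg at hallS
        obtain ⟨j, hj⟩ := hallS
        by_cases htrans : ∀ i, f i ∈ S → f (i + 1) ∈ S
        · exact hj (cycle_propagate (fun i => f i ∈ S) htrans hi₀ j)
        · push_neg at htrans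
          obtain ⟨i, hiS, hi1⟩ := htrans
          exact hzone i hiS (f (i + 1)) hi1 (harc i).1
    · -- out-part case: colors in the second block
      have hnin : ∀ i, f i ∈ S → ¬ ∀ w, w ∉ S → ¬ A (f i) w := by
        intro i hi hin
        have h1 := hcIn' _ hi hin
        have hc0 : c (f i) = c (f i₀) := (hcol i).trans (hcol i₀).symm
        apply hlt
        rw [← hc0, h1]
        simpa using (cIn ⟨f i, hi, hin⟩).isLt
      have hout : ∀ i (hi : f i ∈ S), ∀ w, w ∉ S → ¬ A w (f i) :=
        fun i hi => (hS2 _ hi).resolve_left (hnin i hi)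
      by_cases hallS : ∀ i, f i ∈ S
      · have hinjAdd : Function.Injective (Fin.natAdd c₁ : Fin c₂ → Fin (c₁ + c₂)) := by
          intro a b hab
          have := congrArg Fin.val hab
          simp [Fin.natAdd] at this
          exact Fin.ext this
        refine hcOut ⟨k, fun i =>
          ⟨f i, hallS i, (hS2 _ (hallS i)).resolve_left (hnin i (hallS i))⟩, ?_, ?_⟩
        · intro a b h
          exact hinj (congrArg Subtype.val h)
        · intro i
          refine ⟨(harc i).1, ?_⟩
          have h1 := hcOut' _ (hallS i) (hnin i (hallS i))
          have h2 := hcOut' _ (hallS (i + 1)) (hnin (i + 1) (hallS (i + 1)))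
          have h3 := (harc i).2
          rw [h1, h2] at h3
          exact hinjAdd h3
      · push_neg at hallS
        obtain ⟨j, hj⟩ := hallS
        by_cases htrans : ∀ i, f i ∉ S → f (i + 1) ∉ S
        · exact (cycle_propagate (fun i => f i ∉ S) htrans hj i₀) hi₀
        · push_neg at htrans
          obtain ⟨i, hiNS, hi1⟩ := htrans
          exact hout (i + 1) hi1 (f i) hiNS (harc i).1
end

section
/- Every oriented graph whose underlying undirected graph is triangle-free and which contains no induced directed path P^+(3) (the path on 4 vertices with all three arcs oriented in the same direction) has dichromatic number at most 2; moreover there exists such an oriented graph with dichromatic number exactly 2, so the maximum dichromatic number over this class equals 2. -/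
namespace DTF

variable {V : Type*}

/-- A directed walk of length `l` from `u` to `v`. -/
def Walks (A : V → V → Prop) (u v : V) (l : ℕ) : Prop :=
  ∃ f : ℕ → V, f 0 = u ∧ f l = v ∧ ∀ i < l, A (f i) (f (i+1))

theorem walks_refl (A : V → V → Prop) (u : V) : Walks A u u 0 :=
  ⟨fun _ => u, rfl, rfl, fun i hi => absurd hi (Nat.not_lt_zero i)⟩

theorem walks_trans {A : V → V → Prop} {u v w : V} {l m : ℕ}
    (h1 : Walks A u v l) (h2 : Walks A v w m) : Walks A u w (l + m) := by
  obtain ⟨f, hf0, hfl, hfa⟩ := h1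
  obtain ⟨g, hg0, hgm, hga⟩ := h2
  refine ⟨fun i => if i < l then f i else g (i - l), ?_, ?_, ?_⟩
  · by_cases h : 0 < l
    · simp [h, hf0]
    · have : l = 0 := by omega
      subst this
      simpa [hg0] using hfl.symm.trans hf0
  · have h : ¬ (l + m < l) := by omega
    simp [h, hgm]
  · intro i hi
    rcases lt_trichotomy (i+1) l with h | h | h
    · have hi' : i < l := by omega
      simpa [hi', h] using hfa i hi'
    · have hi' : i < l := by omega
      have h2 : ¬ (i + 1 < l) := by omega
      have : g (i + 1 - l) = f (i+1) := by
        rw [show i + 1 - l = 0 from by omega, hg0, ← hfl, h]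
      simp only [if_pos hi', if_neg h2, this]
      exact hfa i hi'
    · have hi' : ¬ (i < l) := by omega
      have h2 : ¬ (i + 1 < l) := by omega
      have e : i + 1 - l = (i - l) + 1 := by omega
      simp only [if_neg hi', if_neg h2, e]
      exact hga (i - l) (by omega)

end DTF
namespace DTF
variable {V : Type*} {A : V → V → Prop}

theorem tri (htf : UTriangleFree A) {x y z : V}
    (h1 : A x y ∨ A y x) (h2 : A y z ∨ A z y) (h3 : A x z ∨ A z x) : False :=
  htf ⟨x, y, z, h1, h2, h3⟩

theorem p3 (hor : IsOrientedGraph A) (hp : ¬ HasInducedCopy A (dirPath 3))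
    {a b c d : V} (hab : A a b) (hbc : A b c) (hcd : A c d)
    (hac : a ≠ c) (had : a ≠ d) (hbd : b ≠ d)
    (nac : ¬ (A a c ∨ A c a)) (nbd : ¬ (A b d ∨ A d b)) :
    A a d ∨ A d a := by
  by_contra nad
  push_neg at nac nbd nad
  have hne : ∀ {x y : V}, A x y → x ≠ y := by
    rintro x y hxy rfl
    exact hor x x hxy hxy
  have h01 : a ≠ b := hne hab
  have h12 : b ≠ c := hne hbc
  have h23 : c ≠ d := hne hcd
  apply hp
  refine ⟨![a, b, c, d], ?_, ?_⟩
  · intro i j hij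
    fin_cases i <;> fin_cases j <;> simp_all <;> tauto
  · intro x y
    have nba := hor a b hab
    have ncb := hor b c hbc
    have ndc := hor c d hcd
    fin_cases x <;> fin_cases y <;>
      simp [dirPath] <;>
      tauto
end DTF
namespace DTF
section
variable {V : Type*} {A : V → V → Prop}

theorem no_odd_cycle (hor : IsOrientedGraph A) (htf : UTriangleFree A)
    (hp : ¬ HasInducedCopy A (dirPath 3)) :
    ∀ k, Odd k → ∀ f : ℕ → V,
      (∀ i j, i < k → j < k → f i = f j → i = j) →
      (∀ i, A (f (i % k)) (f ((i + 1) % k))) → False := by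
  intro k
  induction k using Nat.strong_induction_on with
  | _ k IH =>
    intro hodd f hinj harc
    have hk1 : k ≠ 0 := by rintro rfl; rcases hodd with ⟨t, ht⟩; omega
    rcases Nat.lt_or_ge k 5 with hk5 | hk5
    · -- k = 1 or k = 3
      have : k = 1 ∨ k = 3 := by
        rcases hodd with ⟨t, rfl⟩; omega
      rcases this with rfl | rfl
      · have h := harc 0
        simp only [Nat.mod_self, Nat.zero_mod] at h
        exact hor _ _ h h
      · have h0 := harc 0
        have h1 := harc 1
        have h2 := harc 2
        norm_num at h0 h1 h2
        exact tri htf (Or.inl h0) (Or.inl h1) (Or.inr h2)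
    · -- main case : k ≥ 5 odd
      set F : ℕ → V := fun m => f (m % k) with hF
      have hkpos : 0 < k := by omega
      have harcF : ∀ i, A (F i) (F (i + 1)) := fun i => harc i
      have hFp : ∀ a b, a % k = b % k → F a = F b := by
        intro a b h; simp only [hF, h]
      have hneF : ∀ a b, a % k ≠ b % k → F a ≠ F b := by
        intro a b h hEq
        exact h (hinj _ _ (Nat.mod_lt _ hkpos) (Nat.mod_lt _ hkpos)
          (by simpa only [hF] using hEq))
      have hmodne : ∀ i a, 0 < a → a < k → i % k ≠ (i + a) % k := by
        intro i a ha hak h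
        have h' : i ≡ i + a [MOD k] := h
        have := (Nat.modEq_iff_dvd' (Nat.le_add_right i a)).mp h'
        simp only [Nat.add_sub_cancel_left] at this
        exact absurd (Nat.le_of_dvd ha this) (by omega)
      have hFne : ∀ i a, 0 < a → a < k → F i ≠ F (i + a) :=
        fun i a ha hak => hneF _ _ (hmodne i a ha hak)
      -- no adjacency at distance 2
      have nonadj2 : ∀ i, ¬ (A (F i) (F (i + 2)) ∨ A (F (i + 2)) (F i)) := by
        intro i h
        exact tri htf (Or.inl (harcF i)) (Or.inl (harcF (i + 1))) h
      -- a forward chord at odd distance D gives a shorter odd cycle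
      have fwd : ∀ D, Odd D → 3 ≤ D → D ≤ k - 2 → ∀ i₀, A (F i₀) (F (i₀ + D)) → False := by
        intro D hD hD3 hDk i₀ hchord
        set k' := k - D + 1 with hk'
        have hk'3 : 3 ≤ k' := by omega
        have hk'k : k' < k := by omega
        have hk'odd : Odd k' := by
          rcases hodd with ⟨t, ht⟩; rcases hD with ⟨s, hs⟩
          exact ⟨t - s, by omega⟩
        apply IH k' hk'k hk'odd (fun m => F (i₀ + D + m))
        · intro i j hi hj hEq
          by_contra hne
          rcases Nat.lt_or_ge i j with hij | hij
          · exact hFne (i₀ + D + i) (j - i) (by omega) (by omega)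
              (by rw [show i₀ + D + i + (j - i) = i₀ + D + j from by omega]; exact hEq)
          · have hij' : j < i := by omega
            exact hFne (i₀ + D + j) (i - j) (by omega) (by omega)
              (by rw [show i₀ + D + j + (i - j) = i₀ + D + i from by omega]; exact hEq.symm)
        · intro m
          set j := m % k' with hj
          have hjk : j < k' := Nat.mod_lt _ (by omega)
          have h1' : (1 : ℕ) % k' = 1 := Nat.mod_eq_of_lt (by omega)
          rcases Nat.lt_or_ge (j + 1) k' with hlt | hge
          · have : (m + 1) % k' = j + 1 := by
              rw [Nat.add_mod, ← hj, h1', Nat.mod_eq_of_lt hlt]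
            rw [this]
            have := harcF (i₀ + D + j)
            rwa [show i₀ + D + j + 1 = i₀ + D + (j + 1) from by omega] at this
          · have hjeq : j = k' - 1 := by omega
            have h1 : (m + 1) % k' = 0 := by
              rw [Nat.add_mod, ← hj, h1', hjeq,
                Nat.sub_add_cancel (show 1 ≤ k' from by omega), Nat.mod_self]
            rw [h1, hjeq]
            have e1 : F (i₀ + D + (k' - 1)) = F i₀ := by
              apply hFp
              rw [show i₀ + D + (k' - 1) = i₀ + k from by omega]
              exact Nat.add_mod_right i₀ k
            have e2 : F (i₀ + D + 0) = F (i₀ + D) := by norm_num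
            rw [e1, e2]
            exact hchord
      -- main inner induction: all odd chords 3 ≤ D ≤ k-2 are backward
      have key : ∀ D, Odd D → 3 ≤ D → D ≤ k - 2 → ∀ i, A (F (i + D)) (F i) := by
        intro D
        induction D using Nat.strong_induction_on with
        | _ D IHD =>
          intro hD hD3 hDk
          -- first establish adjacency at distance D, for all i
          have adj : ∀ i, A (F i) (F (i + D)) ∨ A (F (i + D)) (F i) := by
            rcases Nat.lt_or_ge D 5 with hD5 | hD5
            · -- D = 3 : base case
              have hD3' : D = 3 := by rcases hD with ⟨t, ht⟩; omega
              subst hD3'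
              intro i
              exact p3 hor hp (harcF i) (harcF (i + 1))
                (by have := harcF (i + 2); rwa [show i + 2 + 1 = i + 3 from by omega] at this)
                (hFne i 2 (by omega) (by omega))
                (hFne i 3 (by omega) (by omega))
                (by have := hFne (i + 1) 2 (by omega) (by omega)
                    rwa [show i + 1 + 2 = i + 3 from by omega] at this)
                (nonadj2 i)
                (nonadj2 (i + 1))
            · -- step : D = d + 2 with d ≥ 3
              set d := D - 2 with hd
              have hdodd : Odd d := by rcases hD with ⟨t, ht⟩; exact ⟨t - 1, by omega⟩
              have ih3 : ∀ i, A (F (i + 3)) (F i) :=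
                IHD 3 (by omega) ⟨1, by omega⟩ (by omega) (by omega)
              have ihd : ∀ i, A (F (i + d)) (F i) :=
                IHD d (by omega) hdodd (by omega) (by omega)
              -- adjacency at distance D at base point i+1, then shift
              have adj' : ∀ i, A (F (i + d + 3)) (F (i + 1)) ∨ A (F (i + 1)) (F (i + d + 3)) := by
                intro i
                have a1 : A (F (i + d + 3)) (F (i + d)) := ih3 (i + d)
                have a2 : A (F (i + d)) (F i) := ihd i
                have a3 : A (F i) (F (i + 1)) := harcF i
                -- nonadjacency (i+d+3 , i)
                have n1 : ¬ (A (F (i + d + 3)) (F i) ∨ A (F i) (F (i + d + 3))) := by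
                  intro h
                  exact tri htf (Or.inl a1) (Or.inl a2) h
                -- nonadjacency (i+d , i+1)
                have n2 : ¬ (A (F (i + d)) (F (i + 1)) ∨ A (F (i + 1)) (F (i + d))) := by
                  intro h
                  -- triangle F (i+1), F (i+2), F (i+d)
                  have e1 : A (F (i + 1)) (F (i + 2)) := by
                    have := harcF (i + 1); rwa [show i + 1 + 1 = i + 2 from by omega] at this
                  have e2 : A (F (i + 2)) (F (i + d)) ∨ A (F (i + d)) (F (i + 2)) := by
                    rcases Nat.lt_or_ge d 5 with h5 | h5
                    · -- d = 3 : cycle arc F(i+2) → F(i+3)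
                      have hd3 : d = 3 := by rcases hdodd with ⟨t, ht⟩; omega
                      left
                      have := harcF (i + 2)
                      rwa [show i + 2 + 1 = i + d from by omega] at this
                    · -- d ≥ 5 : chord at distance d - 2
                      right
                      have := IHD (d - 2) (by omega)
                        (by rcases hdodd with ⟨t, ht⟩; exact ⟨t - 1, by omega⟩)
                        (by omega) (by omega) (i + 2)
                      rwa [show i + 2 + (d - 2) = i + d from by omega] at this
                  exact tri htf (Or.inl e1) e2 h.symm
                have hne1 : F (i + d + 3) ≠ F i := by
                  intro hEq
                  exact hFne i (d + 3) (by omega) (by omega)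
                    (by rw [show i + (d + 3) = i + d + 3 from by omega]; exact hEq.symm)
                have hne2 : F (i + d + 3) ≠ F (i + 1) := by
                  intro hEq
                  exact hFne (i + 1) (d + 2) (by omega) (by omega)
                    (by rw [show i + 1 + (d + 2) = i + d + 3 from by omega]; exact hEq.symm)
                have hne3 : F (i + d) ≠ F (i + 1) := by
                  intro hEq
                  exact hFne (i + 1) (d - 1) (by omega) (by omega)
                    (by rw [show i + 1 + (d - 1) = i + d from by omega]; exact hEq.symm)
                exact p3 hor hp a1 a2 a3 hne1 hne2 hne3 n1 n2
              intro i
              have h := adj' (i + (k - 1))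
              have e1 : F (i + (k - 1) + 1) = F i := by
                apply hFp
                rw [show i + (k - 1) + 1 = i + k from by omega]
                exact Nat.add_mod_right i k
              have e2 : F (i + (k - 1) + d + 3) = F (i + D) := by
                apply hFp
                rw [show i + (k - 1) + d + 3 = (i + D) + k from by omega]
                exact Nat.add_mod_right _ k
              rw [e1, e2] at h
              exact h.symm
          -- then each chord must be backward, else `fwd` applies
          intro i
          rcases adj i with h | h
          · exact absurd h (fun hh => fwd D hD hD3 hDk i hh)
          · exact h
      -- conclusion: triangle F 0 , F (k-2) , F (k-1)
      have hb := key (k - 2) (by rcases hodd with ⟨t, ht⟩; exact ⟨t - 1, by omega⟩)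
        (by omega) (le_refl _) 0
      have e1 : A (F (k - 2)) (F (k - 1)) := by
        have := harcF (k - 2); rwa [show k - 2 + 1 = k - 1 from by omega] at this
      have e2 : A (F (k - 1)) (F 0) := by
        have := harcF (k - 1)
        rwa [show k - 1 + 1 = k from by omega, show F k = F 0 from hFp _ _ (by simp)] at this
      exact tri htf (Or.inr (by simpa using hb)) (Or.inl e1) (Or.inr e2)
end
end DTF
namespace DTF
section
variable {V : Type*} {A : V → V → Prop}

theorem closed_walk_even (hor : IsOrientedGraph A) (htf : UTriangleFree A)
    (hp : ¬ HasInducedCopy A (dirPath 3)) :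
    ∀ l (f : ℕ → V), (∀ i < l, A (f i) (f (i + 1))) → f l = f 0 → Even l := by
  intro l
  induction l using Nat.strong_induction_on with
  | _ l IHl =>
    intro f harc hcl
    by_contra hodd
    rw [Nat.not_even_iff_odd] at hodd
    by_cases hinj : ∀ i j, i < l → j < l → f i = f j → i = j
    · refine no_odd_cycle hor htf hp l hodd f hinj ?_
      intro i
      set j := i % l with hj
      have hl0 : 0 < l := by rcases hodd with ⟨t, ht⟩; omega
      have hjl : j < l := Nat.mod_lt _ hl0
      rcases Nat.lt_or_ge (j + 1) l with hlt | hge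
      · have h1 : (i + 1) % l = j + 1 := by
          rw [Nat.add_mod, ← hj, Nat.mod_eq_of_lt (show 1 < l from by omega),
            Nat.mod_eq_of_lt hlt]
        rw [h1]
        exact harc j hjl
      · have hjeq : j + 1 = l := by omega
        have h1 : (i + 1) % l = 0 := by
          rcases Nat.lt_or_ge 1 l with h | h
          · rw [Nat.add_mod, ← hj, Nat.mod_eq_of_lt h, hjeq, Nat.mod_self]
          · have : l = 1 := by omega
            simp [this, Nat.mod_one]
        rw [h1, ← hcl, ← hjeq]
        exact harc j hjl
    · push_neg at hinj
      obtain ⟨i, j, hi, hj, hEq, hne⟩ := hinj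
      have main : ∀ i j, i < j → j < l → f i = f j → False := by
        intro i j hij hjl hEq
        have e1 : Even (j - i) := by
          refine IHl (j - i) (by omega) (fun m => f (i + m)) ?_ ?_
          · intro m hm
            have := harc (i + m) (by omega)
            rwa [show i + m + 1 = i + (m + 1) from by omega] at this
          · show f (i + (j - i)) = f (i + 0)
            rw [show i + (j - i) = j from by omega, ← hEq]
            norm_num
        have e2 : Even (l - (j - i)) := by
          refine IHl (l - (j - i)) (by omega) (fun m => if m ≤ i then f m else f (m + (j - i))) ?_ ?_
          · intro m hm
            rcases lt_trichotomy m i with h | h | h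
            · have h1 : m ≤ i := by omega
              have h2 : m + 1 ≤ i := by omega
              simp only [if_pos h1, if_pos h2]
              exact harc m (by omega)
            · subst h
              have h2 : ¬ (m + 1 ≤ m) := by omega
              simp only [le_refl, if_pos, if_neg h2]
              rw [hEq, show m + 1 + (j - m) = j + 1 from by omega]
              exact harc j (by omega)
            · have h1 : ¬ (m ≤ i) := by omega
              have h2 : ¬ (m + 1 ≤ i) := by omega
              simp only [if_neg h1, if_neg h2]
              rw [show m + 1 + (j - i) = (m + (j - i)) + 1 from by omega]
              exact harc (m + (j - i)) (by omega)
          · have h1 : ¬ (l - (j - i) ≤ i) := by omega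
            show (if l - (j - i) ≤ i then f (l - (j - i)) else f (l - (j - i) + (j - i)))
              = (if 0 ≤ i then f 0 else f (0 + (j - i)))
            rw [if_neg h1, if_pos (Nat.zero_le i),
              show l - (j - i) + (j - i) = l from by omega, hcl]
        rcases hodd with ⟨t, ht⟩
        rcases e1 with ⟨a, ha⟩
        rcases e2 with ⟨b, hb⟩
        omega
      rcases lt_trichotomy i j with h | h | h
      · exact main i j h hj hEq
      · exact hne h
      · exact main j i h hi hEq.symm

theorem walks_closed_even (hor : IsOrientedGraph A) (htf : UTriangleFree A)
    (hp : ¬ HasInducedCopy A (dirPath 3)) {x : V} {l : ℕ} (h : Walks A x x l) : Even l := by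
  obtain ⟨f, hf0, hfl, hfa⟩ := h
  exact closed_walk_even hor htf hp l f hfa (by rw [hf0, hfl])

theorem parity_unique (hor : IsOrientedGraph A) (htf : UTriangleFree A)
    (hp : ¬ HasInducedCopy A (dirPath 3)) {x y : V} {p q m : ℕ}
    (h1 : Walks A x y p) (h2 : Walks A x y q) (h3 : Walks A y x m) :
    (Even p ↔ Even q) := by
  have e1 : Even (p + m) := walks_closed_even hor htf hp (walks_trans h1 h3)
  have e2 : Even (q + m) := walks_closed_even hor htf hp (walks_trans h2 h3)
  rw [Nat.even_add] at e1 e2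
  tauto

end
end DTF
namespace DTF
section
variable {V : Type*}

def reachSetoid (A : V → V → Prop) : Setoid V where
  r u v := (∃ l, Walks A u v l) ∧ (∃ l, Walks A v u l)
  iseqv := ⟨fun v => ⟨⟨0, walks_refl A v⟩, ⟨0, walks_refl A v⟩⟩,
    fun h => ⟨h.2, h.1⟩,
    fun h1 h2 => ⟨⟨_, walks_trans h1.1.choose_spec h2.1.choose_spec⟩,
      ⟨_, walks_trans h2.2.choose_spec h1.2.choose_spec⟩⟩⟩

open Fin.NatCast in
theorem exists_dicoloring {A : V → V → Prop} (hor : IsOrientedGraph A)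
    (htf : UTriangleFree A) (hp : ¬ HasInducedCopy A (dirPath 3)) :
    ∃ c : V → Fin 2, IsDicoloring A c := by
  classical
  set rep : V → V := fun v => (Quotient.mk (reachSetoid A) v).out with hrepdef
  have hrep1 : ∀ v, (reachSetoid A).r (rep v) v := fun v =>
    Quotient.exact (Quotient.out_eq _)
  have hrep2 : ∀ u v, (reachSetoid A).r u v → rep u = rep v := fun u v h => by
    simp only [hrepdef, Quotient.sound h]
  set P : V → Prop := fun v => ∃ l, Even l ∧ Walks A (rep v) v l with hPdef
  refine ⟨fun v => if P v then 0 else 1, ?_⟩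
  rintro ⟨n, g, hginj, hga⟩
  set u := g 0 with hu
  set v := g 1 with hv
  -- basic walks around the cycle
  have harc01 : A u v ∧ _ := hga 0
  have hcast : ∀ m : ℕ, ((m + 1 : ℕ) : Fin (n + 2)) = (m : Fin (n + 2)) + 1 := by
    intro m; push_cast; ring
  have hA : ∀ m : ℕ, A (g (m : Fin (n + 2))) (g ((m + 1 : ℕ) : Fin (n + 2))) := by
    intro m
    have := (hga (m : Fin (n + 2))).1
    rwa [← hcast m] at this
  have w_uv : Walks A u v 1 := by
    refine ⟨fun m => g ((m : ℕ) : Fin (n + 2)), by simp [hu], by simp [hv], ?_⟩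
    intro i hi
    exact hA i
  have w_vu : Walks A v u (n + 1) := by
    refine ⟨fun m => g ((1 + m : ℕ) : Fin (n + 2)), by simp [hv], ?_, ?_⟩
    · show g ((1 + (n + 1) : ℕ) : Fin (n + 2)) = u
      rw [show (1 + (n + 1) : ℕ) = n + 2 from by omega, hu]
      congr 1
      exact Fin.natCast_self (n + 2)
    · intro i hi
      have := hA (1 + i)
      rwa [show (1 + i + 1 : ℕ) = 1 + (i + 1) from by omega] at this
  have huv : (reachSetoid A).r u v := ⟨⟨1, w_uv⟩, ⟨n + 1, w_vu⟩⟩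
  have hcuv : (if P u then (0 : Fin 2) else 1) = (if P v then 0 else 1) := by
    have := (hga 0).2
    rwa [show (0 : Fin (n + 2)) + 1 = 1 from by simp] at this
  have hrepuv : rep u = rep v := hrep2 u v huv
  obtain ⟨⟨l1, w_ru⟩, ⟨l2, w_ur⟩⟩ := hrep1 u
  by_cases hPu : P u
  · have hPv : P v := by
      by_contra hPv
      rw [if_pos hPu, if_neg hPv] at hcuv
      exact absurd hcuv (by decide)
    obtain ⟨p, hpe, wpu⟩ := hPu
    obtain ⟨q, hqe, wqv⟩ := hPv
    rw [← hrepuv] at wqv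
    have w1 : Walks A (rep u) v (p + 1) := walks_trans wpu w_uv
    have w2 : Walks A v (rep u) (n + 1 + l2) := walks_trans w_vu w_ur
    have := parity_unique hor htf hp wqv w1 w2
    rw [Nat.even_add_one] at this
    exact (this.mp hqe) hpe
  · have hl1 : ¬ Even l1 := fun h => hPu ⟨l1, h, w_ru⟩
    have hPv : P v := by
      refine ⟨l1 + 1, by rwa [Nat.even_add_one], ?_⟩
      rw [← hrepuv]
      exact walks_trans w_ru w_uv
    rw [if_neg hPu, if_pos hPv] at hcuv
    exact absurd hcuv (by decide)

theorem upper_bound {A : V → V → Prop} (hor : IsOrientedGraph A)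
    (htf : UTriangleFree A) (hp : ¬ HasInducedCopy A (dirPath 3)) :
    dichromaticNumber A ≤ 2 := by
  obtain ⟨c, hc⟩ := exists_dicoloring hor htf hp
  exact Nat.sInf_le ⟨c, hc⟩

end
end DTF
namespace DTF

def myC4 : Fin 4 → Fin 4 → Prop := fun x y => (y : ℕ) = ((x : ℕ) + 1) % 4

theorem no_two_step {V : Type*} {B : V → V → Prop}
    (h : ∀ x y z, ¬ (B x y ∧ B y z)) : ¬ HasDicycle B := by
  rintro ⟨n, f, hinj, ha⟩
  have h0 := ha 0
  have h1 := ha 1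
  rw [show (0 : Fin (n + 2)) + 1 = 1 from by simp] at h0
  exact h (f 0) (f 1) (f (1 + 1)) ⟨h0, h1⟩

theorem myC4_oriented : IsOrientedGraph myC4 := by
  unfold IsOrientedGraph myC4; decide

theorem myC4_tf : UTriangleFree myC4 := by
  unfold UTriangleFree myC4; decide

set_option maxRecDepth 4000 in
theorem myC4_noP3 : ¬ HasInducedCopy myC4 (dirPath 3) := by
  unfold HasInducedCopy dirPath myC4
  rintro ⟨f, hinj, hiff⟩
  revert hinj hiff
  revert f
  decide

theorem myC4_dichr : dichromaticNumber myC4 = 2 := by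
  have h2 : 2 ∈ {k : ℕ | ∃ c : Fin 4 → Fin k, IsDicoloring myC4 c} := by
    refine ⟨![0, 0, 1, 1], no_two_step ?_⟩
    intro x y z
    revert x y z
    unfold myC4
    decide
  have hne : {k : ℕ | ∃ c : Fin 4 → Fin k, IsDicoloring myC4 c}.Nonempty := ⟨2, h2⟩
  have hle : dichromaticNumber myC4 ≤ 2 := Nat.sInf_le h2
  have hmem := Nat.sInf_mem hne
  rw [dichromaticNumber] at hle ⊢
  rcases Nat.lt_or_ge (sInf {k : ℕ | ∃ c : Fin 4 → Fin k, IsDicoloring myC4 c}) 2 with h | h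
  · exfalso
    interval_cases hh : (sInf {k : ℕ | ∃ c : Fin 4 → Fin k, IsDicoloring myC4 c})
    · obtain ⟨c, -⟩ := hmem
      exact (c 0).elim0
    · obtain ⟨c, hc⟩ := hmem
      apply hc
      refine ⟨2, id, fun a b hab => hab, ?_⟩
      intro i
      constructor
      · show myC4 i (i + 1)
        revert i; unfold myC4; decide
      · exact @Subsingleton.elim (Fin 1) _ (c _) (c _)
  · omega

end DTF
/-- Every oriented graph with triangle-free underlying graph and no induced `P^+(3)` has
dichromatic number at most 2, and this is attained, so the maximum over the class equals 2. -/
theorem dichromatic_trianglefree_no_P3 :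
    (∀ (n : ℕ) (A : Fin n → Fin n → Prop), IsOrientedGraph A →
      UTriangleFree A → ¬ HasInducedCopy A (dirPath 3) →
      dichromaticNumber A ≤ 2) ∧
    (∃ (n : ℕ) (A : Fin n → Fin n → Prop), IsOrientedGraph A ∧
      UTriangleFree A ∧ ¬ HasInducedCopy A (dirPath 3) ∧
      dichromaticNumber A = 2) := by

  constructor
  · intro n A hor htf hp
    exact DTF.upper_bound hor htf hp
  · exact ⟨4, DTF.myC4, DTF.myC4_oriented, DTF.myC4_tf, DTF.myC4_noP3, DTF.myC4_dichr⟩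
end

section
/- Let D be a strongly connected oriented graph whose underlying undirected graph is triangle-free and which contains no induced directed path P^+(3). Fix a vertex x and, for each i ≥ 0, let L_i be the set of vertices at directed out-distance exactly i from x (i.e., the length of a shortest directed path from x to the vertex is i). Then every L_i is an independent set in the underlying undirected graph of D. -/
/-- Out-distance from `x` to `v`: the least length of a directed path (walk) from `x` to `v`. -/
noncomputable def outDist {V : Type*} (A : V → V → Prop) (x v : V) : ℕ :=
  sInf {i : ℕ | ∃ f : ℕ → V, f 0 = x ∧ f i = v ∧ ∀ j, j < i → A (f j) (f (j + 1))}


section LevelsAux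

variable {V : Type*} {A : V → V → Prop}

private lemma walk_exists' {x v : V} (h : Relation.ReflTransGen A x v) :
    ∃ n, ∃ f : ℕ → V, f 0 = x ∧ f n = v ∧ ∀ j, j < n → A (f j) (f (j + 1)) := by
  induction h with
  | refl => exact ⟨0, fun _ => x, rfl, rfl, fun j hj => absurd hj (by omega)⟩
  | @tail b c hxb hbc ih =>
    obtain ⟨n, f, h0, hn, harc⟩ := ih
    refine ⟨n + 1, fun j => if j = n + 1 then c else f j, by simp [h0], by simp, ?_⟩
    intro j hj
    rcases Nat.lt_or_ge j n with hjn | hjn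
    · simpa [Nat.ne_of_lt (by omega : j < n+1), Nat.ne_of_lt (by omega : j+1 < n+1), Nat.ne_of_lt hjn] using
        harc j hjn
    · have hje : j = n := by omega
      simpa [hje, Nat.ne_of_lt (by omega : n < n+1), hn] using hbc

private lemma outDist_le' {x v : V} {n : ℕ}
    (f : ℕ → V) (h0 : f 0 = x) (hn : f n = v) (harc : ∀ j, j < n → A (f j) (f (j + 1))) :
    outDist A x v ≤ n :=
  Nat.sInf_le ⟨f, h0, hn, harc⟩

private lemma outDist_spec' {x v : V} (h : Relation.ReflTransGen A x v) :
    ∃ f : ℕ → V, f 0 = x ∧ f (outDist A x v) = v ∧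
      ∀ j, j < outDist A x v → A (f j) (f (j + 1)) := by
  have hne : {i : ℕ | ∃ f : ℕ → V, f 0 = x ∧ f i = v ∧
      ∀ j, j < i → A (f j) (f (j + 1))}.Nonempty := by
    obtain ⟨n, f, h0, hn, harc⟩ := walk_exists' h
    exact ⟨n, f, h0, hn, harc⟩
  exact Nat.sInf_mem hne

private lemma outDist_le_succ' {x a u : V}
    (h : Relation.ReflTransGen A x a) (hau : A a u) :
    outDist A x u ≤ outDist A x a + 1 := by
  obtain ⟨f, h0, hm, harc⟩ := outDist_spec' h
  set m := outDist A x a with hmdef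
  refine outDist_le' (fun j => if j = m + 1 then u else f j) (by simp [h0]) (by simp) ?_
  intro j hj
  rcases Nat.lt_or_ge j m with hjm | hjm
  · simpa [Nat.ne_of_lt (by omega : j < m+1), Nat.ne_of_lt (by omega : j+1 < m+1), Nat.ne_of_lt hjm] using
      harc j hjm
  · have hje : j = m := by omega
    simpa [hje, Nat.ne_of_lt (by omega : m < m+1), hm] using hau

private lemma inj4' {p q r s : V} (h1 : p ≠ q) (h2 : p ≠ r) (h3 : p ≠ s) (h4 : q ≠ r)
    (h5 : q ≠ s) (h6 : r ≠ s) : Function.Injective ![p,q,r,s] := by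
  intro i j hij
  fin_cases i <;> fin_cases j <;> simp_all

private lemma copy4' {p q r s : V}
    (a1 : A p q) (a2 : A q r) (a3 : A r s)
    (n1 : ¬ A p p) (n2 : ¬ A p r) (n3 : ¬ A p s) (n4 : ¬ A q p) (n5 : ¬ A q q)
    (n6 : ¬ A q s) (n7 : ¬ A r p) (n8 : ¬ A r q) (n9 : ¬ A r r) (n10 : ¬ A s p)
    (n11 : ¬ A s q) (n12 : ¬ A s r) (n13 : ¬ A s s)
    (h1 : p ≠ q) (h2 : p ≠ r) (h3 : p ≠ s) (h4 : q ≠ r) (h5 : q ≠ s) (h6 : r ≠ s) :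
    HasInducedCopy A (dirPath 3) := by
  refine ⟨![p,q,r,s], inj4' h1 h2 h3 h4 h5 h6, ?_⟩
  intro i j
  fin_cases i <;> fin_cases j <;> simp [dirPath] <;> tauto

end LevelsAux

/-- In a strongly connected oriented graph with triangle-free underlying graph and no induced
`P^+(3)`, each out-distance level from a fixed vertex `x` is an independent set. -/
theorem levels_independent {V : Type*} [Fintype V] (A : V → V → Prop)
    (hor : IsOrientedGraph A)
    (htf : UTriangleFree A)
    (hP3 : ¬ HasInducedCopy A (dirPath 3))
    (hsc : ∀ x y : V, Relation.ReflTransGen A x y)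
    (x : V) :
    ∀ u v : V, outDist A x u = outDist A x v → ¬ (A u v ∨ A v u) := by
  have noloop : ∀ w, ¬ A w w := fun w hw => hor w w hw hw
  suffices H : ∀ d : ℕ, ∀ u v : V, outDist A x u = d → outDist A x v = d → ¬ A u v by
    rintro u v h (h1 | h1)
    · exact H (outDist A x u) u v rfl h.symm h1
    · exact H (outDist A x u) v u h.symm rfl h1
  intro d
  induction d using Nat.strong_induction_on with
  | _ d IH =>
  intro u v hu hv huv
  have hne_uv : u ≠ v := by rintro rfl; exact noloop u huv
  rcases d with _ | _ | k
  · -- d = 0 : u = v = x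
    obtain ⟨f, hf0, hfn, -⟩ := outDist_spec' (hsc x u)
    obtain ⟨g, hg0, hgn, -⟩ := outDist_spec' (hsc x v)
    rw [hu] at hfn; rw [hv] at hgn
    exact hne_uv (by rw [← hfn, hf0, ← hg0, hgn])
  · -- d = 1 : triangle x u v
    obtain ⟨f, hf0, hfn, hfarc⟩ := outDist_spec' (hsc x u)
    obtain ⟨g, hg0, hgn, hgarc⟩ := outDist_spec' (hsc x v)
    rw [hu] at hfn hfarc; rw [hv] at hgn hgarc
    have hxu : A x u := by have := hfarc 0 (by omega); rwa [hf0, show (0:ℕ)+1 = 1 from rfl, hfn] at this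
    have hxv : A x v := by have := hgarc 0 (by omega); rwa [hg0, show (0:ℕ)+1 = 1 from rfl, hgn] at this
    exact htf ⟨x, u, v, Or.inl hxu, Or.inl huv, Or.inl hxv⟩
  · -- d = k + 2
    obtain ⟨f, hf0, hfn, hfarc⟩ := outDist_spec' (hsc x u)
    rw [hu] at hfn hfarc
    set a := f (k+1) with hadef
    set b := f k with hbdef
    have hba : A b a := hfarc k (by omega)
    have hau : A a u := by
      have := hfarc (k+1) (by omega)
      rwa [show k+1+1 = k+2 from rfl, hfn] at this
    have hda : outDist A x a = k + 1 := by
      have h1 : outDist A x a ≤ k + 1 :=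
        outDist_le' f hf0 rfl (fun j hj => hfarc j (by omega))
      have h2 : outDist A x u ≤ outDist A x a + 1 := outDist_le_succ' (hsc x a) hau
      omega
    have hdb : outDist A x b = k := by
      have h1 : outDist A x b ≤ k :=
        outDist_le' f hf0 rfl (fun j hj => hfarc j (by omega))
      have h2 : outDist A x a ≤ outDist A x b + 1 := outDist_le_succ' (hsc x b) hba
      omega
    have nav : ¬ (A a v ∨ A v a) := fun h => htf ⟨a, u, v, Or.inl hau, Or.inl huv, h⟩
    have nbu : ¬ (A b u ∨ A u b) := fun h => htf ⟨b, a, u, Or.inl hba, Or.inl hau, h⟩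
    have nbv : ¬ A b v := fun h => by
      have := outDist_le_succ' (hsc x b) h; omega
    have hvb : A v b := by
      by_contra hvb
      exact hP3 (copy4' hba hau huv
        (noloop b) (fun h => nbu (Or.inl h)) nbv (hor b a hba) (noloop a)
        (fun h => nav (Or.inl h)) (fun h => nbu (Or.inr h)) (hor a u hau) (noloop u)
        hvb (fun h => nav (Or.inr h)) (hor u v huv) (noloop v)
        (fun h => noloop a (h ▸ hba)) (by intro h; rw [h] at hdb; omega)
        (by intro h; rw [h] at hdb; omega) (fun h => noloop u (h ▸ hau))
        (by intro h; rw [h] at hda; omega) hne_uv)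
    obtain ⟨g, hg0, hgn, hgarc⟩ := outDist_spec' (hsc x v)
    rw [hv] at hgn hgarc
    set a' := g (k+1) with ha'def
    have ha'v : A a' v := by
      have := hgarc (k+1) (by omega)
      rwa [show k+1+1 = k+2 from rfl, hgn] at this
    have hda' : outDist A x a' = k + 1 := by
      have h1 : outDist A x a' ≤ k + 1 :=
        outDist_le' g hg0 rfl (fun j hj => hgarc j (by omega))
      have h2 : outDist A x v ≤ outDist A x a' + 1 := outDist_le_succ' (hsc x a') ha'v
      omega
    have hane : a ≠ a' := fun h => nav (Or.inl (by rw [h]; exact ha'v))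
    have naa' : ¬ A a a' := IH (k+1) (by omega) a a' hda hda'
    have na'a : ¬ A a' a := IH (k+1) (by omega) a' a hda' hda
    have nua' : ¬ (A u a' ∨ A a' u) := fun h => htf ⟨u, v, a', Or.inl huv, Or.inr ha'v, h⟩
    have nba' : ¬ A b a' := fun h => htf ⟨b, a', v, Or.inl h, Or.inl ha'v, Or.inr hvb⟩
    by_cases ha'b : A a' b
    · -- induced path a' → b → a → u
      exact hP3 (copy4' ha'b hba hau
        (noloop a') na'a (fun h => nua' (Or.inr h)) (hor a' b ha'b) (noloop b)
        (fun h => nbu (Or.inl h)) naa' (hor b a hba) (noloop a)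
        (fun h => nua' (Or.inl h)) (fun h => nbu (Or.inr h)) (hor a u hau) (noloop u)
        (fun h => noloop b (h ▸ ha'b)) hane.symm
        (by intro h; rw [h] at hda'; omega) (fun h => noloop a (h ▸ hba))
        (by intro h; rw [h] at hdb; omega) (fun h => noloop u (h ▸ hau)))
    · -- induced path a' → v → b → a
      exact hP3 (copy4' ha'v hvb hba
        (noloop a') ha'b na'a (hor a' v ha'v) (noloop v)
        (fun h => nav (Or.inr h)) nba' nbv (noloop b)
        naa' (fun h => nav (Or.inl h)) (hor b a hba) (noloop a)
        (fun h => noloop v (h ▸ ha'v)) (by intro h; rw [h] at hda'; omega)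
        hane.symm (fun h => noloop b (h ▸ hvb))
        (by intro h; rw [h] at hv; omega) (fun h => noloop a (h ▸ hba)))
end

section
/- Let F be an oriented graph and suppose there exists an oriented graph D whose underlying undirected graph contains no K_4 and which contains no induced directed path P^+(3), such that D consists of: an induced copy F′ of F; an independent set L of vertices disjoint from V(F′) such that every vertex of F′ has at least one neighbor in L; and two further vertices u and v with the arc u→v, with arcs v→x and x→u for every x ∈ L, and with no arcs between {u, v} and V(F′). Then F contains no induced copy of the oriented graph R. -/
lemma inj4_aux {α : Type*} {a b c d : α} (e1 : a ≠ b) (e2 : a ≠ c) (e3 : a ≠ d)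
    (e4 : b ≠ c) (e5 : b ≠ d) (e6 : c ≠ d) :
    Function.Injective ![a, b, c, d] := by
  intro i j hij
  fin_cases i <;> fin_cases j <;> simp_all

lemma path3_aux {V : Type*} (A : V → V → Prop) (a b c d : V)
    (e1 : a ≠ b) (e2 : a ≠ c) (e3 : a ≠ d) (e4 : b ≠ c) (e5 : b ≠ d) (e6 : c ≠ d)
    (h1 : A a b) (h2 : A b c) (h3 : A c d)
    (n1 : ¬ A a a) (n2 : ¬ A a c) (n3 : ¬ A a d)
    (n4 : ¬ A b a) (n5 : ¬ A b b) (n6 : ¬ A b d)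
    (n7 : ¬ A c a) (n8 : ¬ A c b) (n9 : ¬ A c c)
    (n10 : ¬ A d a) (n11 : ¬ A d b) (n12 : ¬ A d c) (n13 : ¬ A d d) :
    HasInducedCopy A (dirPath 3) := by
  refine ⟨![a, b, c, d], inj4_aux e1 e2 e3 e4 e5 e6, ?_⟩
  intro i j
  fin_cases i <;> fin_cases j <;> simp_all [dirPath]

/-- If an oriented graph `F` extends to a `K_4`-free, induced-`P^+(3)`-free oriented graph `D`
consisting of an induced copy of `F`, an independent set `L` (every vertex of the copy having
a neighbor in `L`), and two extra vertices `u, v` with `u→v`, `v→x→u` for all `x ∈ L`, and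
no arcs between `{u, v}` and the copy of `F`, then `F` has no induced copy of `R`. -/
theorem aux_class_R_free {VF VD : Type*} [Fintype VF] [Fintype VD]
    (F : VF → VF → Prop) (D : VD → VD → Prop)
    (horD : IsOrientedGraph D)
    (hK4 : UK4Free D)
    (hP3 : ¬ HasInducedCopy D (dirPath 3))
    (phi : VF → VD) (hinj : Function.Injective phi)
    (hcopy : ∀ x y : VF, F x y ↔ D (phi x) (phi y))
    (L : Set VD)
    (hLind : ∀ x ∈ L, ∀ y ∈ L, ¬ D x y)
    (hLF : ∀ x : VF, phi x ∉ L)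
    (hnbr : ∀ x : VF, ∃ l ∈ L, D (phi x) l ∨ D l (phi x))
    (u v : VD)
    (huv : D u v)
    (huL : u ∉ L) (hvL : v ∉ L)
    (huF : ∀ x : VF, phi x ≠ u) (hvF : ∀ x : VF, phi x ≠ v)
    (hcyc : ∀ x ∈ L, D v x ∧ D x u)
    (hnoarc : ∀ x : VF, ¬ (D u (phi x) ∨ D (phi x) u) ∧ ¬ (D v (phi x) ∨ D (phi x) v))
    (hcover : ∀ w : VD, (∃ x : VF, phi x = w) ∨ w ∈ L ∨ w = u ∨ w = v) :
    ¬ HasInducedCopy F Rdigraph := by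
  rintro ⟨r, -, hr⟩
  have noloop : ∀ p : VD, ¬ D p p := fun p h => horD p p h h
  have hFne : ∀ x y : VF, F x y → phi x ≠ phi y := by
    intro x y hxy heq
    exact noloop _ (heq ▸ (hcopy x y).mp hxy)
  have harc : ∀ i j : Fin 7, Rdigraph i j → F (r i) (r j) := fun i j h => (hr i j).mp h
  have hab : F (r 0) (r 1) := harc 0 1 (by unfold Rdigraph; decide)
  have hbc : F (r 1) (r 2) := harc 1 2 (by unfold Rdigraph; decide)
  have hca : F (r 2) (r 0) := harc 2 0 (by unfold Rdigraph; decide)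
  have hbd : F (r 1) (r 3) := harc 1 3 (by unfold Rdigraph; decide)
  have hda : F (r 3) (r 0) := harc 3 0 (by unfold Rdigraph; decide)
  have hce : F (r 2) (r 4) := harc 2 4 (by unfold Rdigraph; decide)
  have heb : F (r 4) (r 1) := harc 4 1 (by unfold Rdigraph; decide)
  have hdg : F (r 3) (r 6) := harc 3 6 (by unfold Rdigraph; decide)
  have hgf : F (r 6) (r 5) := harc 6 5 (by unfold Rdigraph; decide)
  have hfe : F (r 5) (r 4) := harc 5 4 (by unfold Rdigraph; decide)
  have heg : F (r 4) (r 6) := harc 4 6 (by unfold Rdigraph; decide)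
  obtain ⟨ℓ, hℓL, hAa⟩ := hnbr (r 0)
  have hlu : D ℓ u := (hcyc ℓ hℓL).2
  have hvl : D v ℓ := (hcyc ℓ hℓL).1
  have neFL : ∀ x : VF, phi x ≠ ℓ := fun x h => hLF x (by rw [h]; exact hℓL)
  have neVL : v ≠ ℓ := fun h => hvL (by rw [h]; exact hℓL)
  have neUL : ℓ ≠ u := fun h => huL (by rw [← h]; exact hℓL)
  -- propagation rule from induced P+(3)-freeness, via the path  w → x → ℓ → u
  have out : ∀ x w : VF, D (phi x) ℓ → F w x → D (phi w) ℓ ∨ D ℓ (phi w) := by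
    intro x w hxl hwx
    by_contra hA
    have hA1 : ¬ D (phi w) ℓ := fun h => hA (Or.inl h)
    have hA2 : ¬ D ℓ (phi w) := fun h => hA (Or.inr h)
    exact hP3 (path3_aux D (phi w) (phi x) ℓ u
      (hFne w x hwx) (neFL w) (huF w) (neFL x) (huF x) neUL
      ((hcopy w x).mp hwx) hxl hlu
      (noloop _) hA1 (fun h => (hnoarc w).1 (Or.inr h))
      (horD _ _ ((hcopy w x).mp hwx)) (noloop _) (fun h => (hnoarc x).1 (Or.inr h))
      hA2 (horD _ _ hxl) (noloop _)
      (fun h => (hnoarc w).1 (Or.inl h)) (fun h => (hnoarc x).1 (Or.inl h))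
      (horD _ _ hlu) (noloop _))
  -- propagation rule via the path  v → ℓ → x → w
  have inn : ∀ x w : VF, D ℓ (phi x) → F x w → D (phi w) ℓ ∨ D ℓ (phi w) := by
    intro x w hlx hxw
    by_contra hA
    have hA1 : ¬ D (phi w) ℓ := fun h => hA (Or.inl h)
    have hA2 : ¬ D ℓ (phi w) := fun h => hA (Or.inr h)
    exact hP3 (path3_aux D v ℓ (phi x) (phi w)
      neVL (Ne.symm (hvF x)) (Ne.symm (hvF w)) (Ne.symm (neFL x)) (Ne.symm (neFL w))
      (hFne x w hxw)
      hvl hlx ((hcopy x w).mp hxw)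
      (noloop _) (fun h => (hnoarc x).2 (Or.inl h)) (fun h => (hnoarc w).2 (Or.inl h))
      (horD _ _ hvl) (noloop _) hA2
      (fun h => (hnoarc x).2 (Or.inr h)) (horD _ _ hlx) (noloop _)
      (fun h => (hnoarc w).2 (Or.inr h)) hA1
      (horD _ _ ((hcopy x w).mp hxw)) (noloop _))
  -- K4-freeness rule
  have k4 : ∀ x y z : VF, (F x y ∨ F y x) → (F x z ∨ F z x) → (F y z ∨ F z y) →
      (D (phi x) ℓ ∨ D ℓ (phi x)) → (D (phi y) ℓ ∨ D ℓ (phi y)) →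
      (D (phi z) ℓ ∨ D ℓ (phi z)) → False := by
    intro x y z hxy hxz hyz hx hy hz
    exact hK4 ⟨phi x, phi y, phi z, ℓ,
      hxy.imp ((hcopy x y).mp) ((hcopy y x).mp),
      hxz.imp ((hcopy x z).mp) ((hcopy z x).mp),
      hx,
      hyz.imp ((hcopy y z).mp) ((hcopy z y).mp),
      hy, hz⟩
  rcases hAa with haℓ | hℓa
  · -- case a → ℓ
    have hAc := out (r 0) (r 2) haℓ hca
    have hAd := out (r 0) (r 3) haℓ hda
    have hnb : ¬ (D (phi (r 1)) ℓ ∨ D ℓ (phi (r 1))) := fun h =>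
      k4 (r 0) (r 1) (r 2) (Or.inl hab) (Or.inr hca) (Or.inl hbc) (Or.inl haℓ) h hAc
    have hAe : D (phi (r 4)) ℓ ∨ D ℓ (phi (r 4)) := by
      rcases hAc with hcl | hlc
      · exact absurd (out (r 2) (r 1) hcl hbc) hnb
      · exact inn (r 2) (r 4) hlc hce
    have hAg : D (phi (r 6)) ℓ ∨ D ℓ (phi (r 6)) := by
      rcases hAd with hdl | hld
      · exact absurd (out (r 3) (r 1) hdl hbd) hnb
      · exact inn (r 3) (r 6) hld hdg
    have hAf : D (phi (r 5)) ℓ ∨ D ℓ (phi (r 5)) := by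
      rcases hAe with hel | hle
      · exact out (r 4) (r 5) hel hfe
      · exact absurd (inn (r 4) (r 1) hle heb) hnb
    exact k4 (r 4) (r 5) (r 6) (Or.inr hfe) (Or.inl heg) (Or.inr hgf) hAe hAf hAg
  · -- case ℓ → a
    have hAb := inn (r 0) (r 1) hℓa hab
    have hnc : ¬ (D (phi (r 2)) ℓ ∨ D ℓ (phi (r 2))) := fun h =>
      k4 (r 0) (r 1) (r 2) (Or.inl hab) (Or.inr hca) (Or.inl hbc) (Or.inr hℓa) hAb h
    have hnd : ¬ (D (phi (r 3)) ℓ ∨ D ℓ (phi (r 3))) := fun h =>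
      k4 (r 0) (r 1) (r 3) (Or.inl hab) (Or.inr hda) (Or.inl hbd) (Or.inr hℓa) hAb h
    have hAe : D (phi (r 4)) ℓ ∨ D ℓ (phi (r 4)) := by
      rcases hAb with hbl | hlb
      · exact out (r 1) (r 4) hbl heb
      · exact absurd (inn (r 1) (r 2) hlb hbc) hnc
    have hAg : D (phi (r 6)) ℓ ∨ D ℓ (phi (r 6)) := by
      rcases hAe with hel | hle
      · exact absurd (out (r 4) (r 2) hel hce) hnc
      · exact inn (r 4) (r 6) hle heg
    have hAf : D (phi (r 5)) ℓ ∨ D ℓ (phi (r 5)) := by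
      rcases hAg with hgl | hlg
      · exact absurd (out (r 6) (r 3) hgl hdg) hnd
      · exact inn (r 6) (r 5) hlg hgf
    exact k4 (r 4) (r 5) (r 6) (Or.inr hfe) (Or.inl heg) (Or.inr hgf) hAe hAf hAg
end
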